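/- arXiv:1609.08311 — 4 statements merged into one kernel-verified Lean document; each statement's English description precedes it below -/
import Mathlib

section
/- Let G be a finite group. A subgroup K of G is a sol-component of G if and only if K is a minimal member, under inclusion, of the set of nonsolvable subnormal subgroups of G. -/
/-- A subgroup is subnormal if it is a term of a finite chain of subgroups,
each normal in the next, ending at the whole group. -/
def Subgroup.IsSubnormalIn {G : Type*} [Group G] (H : Subgroup G) : Prop :=
  ∃ (n : ℕ) (c : Fin (n + 1) → Subgroup G),
    c 0 = H ∧ c (Fin.last n) = ⊤ ∧
    ∀ i : Fin n, c i.castSucc ≤ c i.succ ∧ ((c i.castSucc).subgroupOf (c i.succ)).Normal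

/-- A group is quasisimple if it is perfect and its quotient by its center is simple. -/
def IsQuasisimple (H : Type*) [Group H] : Prop :=
  (⁅(⊤ : Subgroup H), (⊤ : Subgroup H)⁆ = ⊤) ∧ IsSimpleGroup (H ⧸ Subgroup.center H)

/-- A component of a group is a quasisimple subnormal subgroup. -/
def Subgroup.IsComponent {G : Type*} [Group G] (K : Subgroup G) : Prop :=
  K.IsSubnormalIn ∧ IsQuasisimple K

/-- `sol G` : the subgroup generated by all normal solvable subgroups of `G`;
for finite `G` this is the largest normal solvable subgroup. -/
def sol (G : Type*) [Group G] : Subgroup G :=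
  Subgroup.closure {x : G | ∃ N : Subgroup G, N.Normal ∧ IsSolvable N ∧ x ∈ N}

instance sol_normal (G : Type*) [Group G] : (sol G).Normal := by
  constructor
  intro n hn g
  induction hn using Subgroup.closure_induction with
  | mem x hx =>
      obtain ⟨N, hN, hNs, hxN⟩ := hx
      exact Subgroup.subset_closure ⟨N, hN, hNs, hN.conj_mem x hxN g⟩
  | one => simpa using (sol G).one_mem
  | mul x y _ _ hx hy =>
      have : g * (x * y) * g⁻¹ = (g * x * g⁻¹) * (g * y * g⁻¹) := by group
      rw [this]; exact (sol G).mul_mem hx hy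
  | inv x _ hx =>
      have : g * x⁻¹ * g⁻¹ = (g * x * g⁻¹)⁻¹ := by group
      rw [this]; exact (sol G).inv_mem hx

/-- A sol-component of `G`: a perfect subnormal subgroup whose image in `G/sol(G)`
is a component of `G/sol(G)`. -/
def Subgroup.IsSolComponent {G : Type*} [Group G] (K : Subgroup G) : Prop :=
  ⁅K, K⁆ = K ∧ K.IsSubnormalIn ∧
    (K.map (QuotientGroup.mk' (sol G))).IsComponent

/-- The subgroup generated by the sol-components. -/
def layerSol (G : Type*) [Group G] : Subgroup G :=
  Subgroup.closure {x : G | ∃ K : Subgroup G, K.IsSolComponent ∧ x ∈ K}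

/-- `O*(G) = sol(G) · layerSol(G)`. -/
def Ostar (G : Type*) [Group G] : Subgroup G := sol G ⊔ layerSol G

/-- The Fitting subgroup: the subgroup generated by all nilpotent normal subgroups. -/
def fitting (G : Type*) [Group G] : Subgroup G :=
  Subgroup.closure {x : G | ∃ N : Subgroup G, N.Normal ∧ Group.IsNilpotent N ∧ x ∈ N}

/-- The layer `E(G)`: the subgroup generated by all components. -/
def layer (G : Type*) [Group G] : Subgroup G :=
  Subgroup.closure {x : G | ∃ K : Subgroup G, K.IsComponent ∧ x ∈ K}

/-- The generalized Fitting subgroup `F*(G) = F(G)E(G)`. -/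
def Fstar (G : Type*) [Group G] : Subgroup G := fitting G ⊔ layer G

/-- `O_p(G)` : the subgroup generated by all normal `p`-subgroups of `G`. -/
def pCore (p : ℕ) (G : Type*) [Group G] : Subgroup G :=
  Subgroup.closure {x : G | ∃ N : Subgroup G, N.Normal ∧ IsPGroup p N ∧ x ∈ N}


section Machinery

open Subgroup
open scoped commutatorElement

variable {G : Type*} [Group G]

/-- Concrete relative normality: `A ≤ B` and `B` normalizes `A`. -/
def NormalIn (A B : Subgroup G) : Prop :=
  A ≤ B ∧ ∀ b ∈ B, ∀ a ∈ A, b * a * b⁻¹ ∈ A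

theorem NormalIn.subgroupOf_normal {A B : Subgroup G} (h : NormalIn A B) :
    (A.subgroupOf B).Normal := by
  constructor
  intro a ha g
  rw [Subgroup.mem_subgroupOf] at ha ⊢
  exact h.2 g.1 g.2 a.1 ha

theorem normalIn_of_subgroupOf_normal {A B : Subgroup G} (hle : A ≤ B)
    (h : (A.subgroupOf B).Normal) : NormalIn A B := by
  refine ⟨hle, fun b hb a ha => ?_⟩
  have := h.conj_mem ⟨a, hle ha⟩ (by rwa [Subgroup.mem_subgroupOf]) ⟨b, hb⟩
  rwa [Subgroup.mem_subgroupOf] at this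

theorem NormalIn.of_normal {A : Subgroup G} (h : A.Normal) (B : Subgroup G) (hle : A ≤ B) :
    NormalIn A B :=
  ⟨hle, fun b _ a ha => h.conj_mem a ha b⟩

theorem NormalIn.normal_of_top {A : Subgroup G} (h : NormalIn A ⊤) : A.Normal :=
  ⟨fun a ha g => h.2 g trivial a ha⟩

/-- Subnormal chains of length `n` from `A` up to `B`. -/
def SubN : ℕ → Subgroup G → Subgroup G → Prop
  | 0, A, B => A = B
  | n+1, A, B => ∃ T, NormalIn A T ∧ SubN n T B

theorem subN_le : ∀ {n : ℕ} {A B : Subgroup G}, SubN n A B → A ≤ B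
  | 0, _, _, h => le_of_eq h
  | _+1, _, _, ⟨_, hAT, hTB⟩ => hAT.1.trans (subN_le hTB)

theorem subN_trans {m : ℕ} {C : Subgroup G} : ∀ {n : ℕ} {A B : Subgroup G},
    SubN n A B → SubN m B C → SubN (n + m) A C := by
  intro n
  induction n with
  | zero =>
      intro A B h h'
      have hAB : A = B := h
      rw [Nat.zero_add, hAB]
      exact h'
  | succ n ih =>
      intro A B h h'
      obtain ⟨T, hAT, hTB⟩ := h
      rw [Nat.succ_add]
      exact ⟨T, hAT, ih hTB h'⟩

theorem subN_inf {K : Subgroup G} : ∀ {n : ℕ} {A B : Subgroup G},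
    SubN n A B → SubN n (A ⊓ K) (B ⊓ K) := by
  intro n
  induction n with
  | zero =>
      intro A B h
      have hAB : A = B := h
      show A ⊓ K = B ⊓ K
      rw [hAB]
  | succ n ih =>
      intro A B h
      obtain ⟨T, hAT, hTB⟩ := h
      refine ⟨T ⊓ K, ⟨inf_le_inf_right K hAT.1, fun b hb a ha =>
        ⟨hAT.2 b hb.1 a ha.1, K.mul_mem (K.mul_mem hb.2 ha.2) (K.inv_mem hb.2)⟩⟩, ih hTB⟩

theorem subN_map {G' : Type*} [Group G'] (f : G →* G') :
    ∀ {n : ℕ} {A B : Subgroup G}, SubN n A B → SubN n (A.map f) (B.map f) := by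
  intro n
  induction n with
  | zero =>
      intro A B h
      have hAB : A = B := h
      show A.map f = B.map f
      rw [hAB]
  | succ n ih =>
      intro A B h
      obtain ⟨T, hAT, hTB⟩ := h
      refine ⟨T.map f, ⟨Subgroup.map_mono hAT.1, ?_⟩, ih hTB⟩
      rintro b hb a ha
      rcases hb with ⟨b, hb, rfl⟩
      rcases ha with ⟨a, ha, rfl⟩
      exact ⟨b * a * b⁻¹, hAT.2 b hb a ha, by simp⟩

theorem subN_comap {G' : Type*} [Group G'] (f : G →* G') :
    ∀ {n : ℕ} {A B : Subgroup G'}, SubN n A B → SubN n (A.comap f) (B.comap f) := by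
  intro n
  induction n with
  | zero =>
      intro A B h
      have hAB : A = B := h
      show A.comap f = B.comap f
      rw [hAB]
  | succ n ih =>
      intro A B h
      obtain ⟨T, hAT, hTB⟩ := h
      refine ⟨T.comap f, ⟨Subgroup.comap_mono hAT.1, ?_⟩, ih hTB⟩
      intro b hb a ha
      have h1 : f (b * a * b⁻¹) = f b * f a * (f b)⁻¹ := by simp
      simpa [Subgroup.mem_comap, h1] using hAT.2 (f b) hb (f a) ha

theorem isSubnormalIn_iff_subN {H : Subgroup G} :
    H.IsSubnormalIn ↔ ∃ n, SubN n H (⊤ : Subgroup G) := by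
  constructor
  · rintro ⟨n, c, hc0, hclast, hlink⟩
    refine ⟨n, ?_⟩
    rw [← hc0, ← hclast]; clear hc0 hclast
    induction n with
    | zero =>
        show c 0 = c (Fin.last 0)
        rfl
    | succ n ih =>
        refine ⟨c 1, ?_, ?_⟩
        · have h0 := hlink 0
          have e1 : (0 : Fin (n+1)).castSucc = 0 := rfl
          have e2 : (0 : Fin (n+1)).succ = 1 := rfl
          rw [e1, e2] at h0
          exact normalIn_of_subgroupOf_normal h0.1 h0.2
        · have := ih (c := fun i => c i.succ) (fun i => by
            have h := hlink i.succ
            rwa [← Fin.succ_castSucc] at h)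
          have hl : (Fin.last n).succ = Fin.last (n+1) := Fin.succ_last n
          rw [← hl]
          have e0 : (0 : Fin (n+1)).succ = 1 := rfl
          rw [← e0]
          exact this
  · rintro ⟨n, hn⟩
    suffices h : ∀ (n : ℕ) (A B : Subgroup G), SubN n A B →
        ∃ c : Fin (n + 1) → Subgroup G, c 0 = A ∧ c (Fin.last n) = B ∧
          ∀ i : Fin n, c i.castSucc ≤ c i.succ ∧ ((c i.castSucc).subgroupOf (c i.succ)).Normal by
      obtain ⟨c, h1, h2, h3⟩ := h n H ⊤ hn
      exact ⟨n, c, h1, h2, h3⟩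
    clear hn
    intro n
    induction n with
    | zero =>
        rintro A B (rfl : A = B)
        exact ⟨fun _ => A, rfl, rfl, fun i => i.elim0⟩
    | succ n ih =>
        rintro A B ⟨T, hAT, hTB⟩
        obtain ⟨c, h1, h2, h3⟩ := ih T B hTB
        refine ⟨Fin.cons A c, Fin.cons_zero _ _, ?_, ?_⟩
        · rw [← Fin.succ_last, Fin.cons_succ, h2]
        · intro i
          induction i using Fin.cases with
          | zero =>
              rw [Fin.castSucc_zero, Fin.cons_zero]
              have e2 : (0 : Fin (n+1)).succ = Fin.succ 0 := rfl
              rw [e2, Fin.cons_succ, h1]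
              exact ⟨hAT.1, hAT.subgroupOf_normal⟩
          | succ j =>
              rw [← Fin.succ_castSucc, Fin.cons_succ, Fin.cons_succ]
              exact h3 j

theorem isSolvable_of_mulEquiv {X Y : Type*} [Group X] [Group Y] (e : X ≃* Y)
    (h : IsSolvable X) : IsSolvable Y := by
  haveI : Group.IsSolvable X := h
  exact solvable_of_surjective (f := e.toMonoidHom) e.surjective

theorem solvable_of_le {A B : Subgroup G} (h : A ≤ B) (hB : IsSolvable ↥B) :
    IsSolvable ↥A := by
  haveI : Group.IsSolvable ↥B := hB
  exact solvable_of_solvable_injective (Subgroup.inclusion_injective h)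

theorem isSolvable_map {G' : Type*} [Group G'] (f : G →* G') {A : Subgroup G}
    (hA : IsSolvable ↥A) : IsSolvable ↥(A.map f) := by
  haveI : Group.IsSolvable ↥A := hA
  exact solvable_of_surjective (f := f.subgroupMap A) (f.subgroupMap_surjective A)

theorem isSolvable_of_map_of_ker {G' : Type*} [Group G'] (f : G →* G') (L : Subgroup G)
    (hker : IsSolvable ↥f.ker) (him : IsSolvable ↥(L.map f)) : IsSolvable ↥L := by
  haveI : Group.IsSolvable ↥(L.map f) := him
  haveI : Group.IsSolvable ↥(f.ker ⊓ L) := solvable_of_le inf_le_left hker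
  refine solvable_of_ker_le_range (Subgroup.inclusion (inf_le_right : f.ker ⊓ L ≤ L))
    (f.subgroupMap L) ?_
  intro x hx
  have hx1 : f x.1 = 1 := by
    have : (f.subgroupMap L) x = 1 := hx
    exact congrArg Subtype.val this
  refine ⟨⟨x.1, ⟨hx1, x.2⟩⟩, ?_⟩
  rfl

theorem subsingleton_of_perfect_solvable {W : Type*} [Group W]
    (h : ⁅(⊤ : Subgroup W), (⊤ : Subgroup W)⁆ = ⊤) (hs : IsSolvable W) : Subsingleton W := by
  obtain ⟨n, hn⟩ := hs.solvable
  have htop : ∀ m, derivedSeries W m = ⊤ := by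
    intro m
    induction m with
    | zero => rfl
    | succ m ih => rw [derivedSeries_succ, ih, h]
  have hbt : (⊤ : Subgroup W) = ⊥ := by rw [← htop n, hn]
  constructor
  intro a b
  have ha : a ∈ (⊥ : Subgroup W) := hbt ▸ Subgroup.mem_top a
  have hb : b ∈ (⊥ : Subgroup W) := hbt ▸ Subgroup.mem_top b
  rw [Subgroup.mem_bot] at ha hb
  rw [ha, hb]

theorem eq_top_of_perfect_of_solvable_quotient {W : Type*} [Group W]
    (h : ⁅(⊤ : Subgroup W), (⊤ : Subgroup W)⁆ = ⊤) (N : Subgroup W) [N.Normal]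
    (hs : IsSolvable (W ⧸ N)) : N = ⊤ := by
  have hsur := QuotientGroup.mk'_surjective N
  have hq : ⁅(⊤ : Subgroup (W ⧸ N)), (⊤ : Subgroup (W ⧸ N))⁆ = ⊤ := by
    calc ⁅(⊤ : Subgroup (W ⧸ N)), (⊤ : Subgroup (W ⧸ N))⁆
        = ⁅Subgroup.map (QuotientGroup.mk' N) ⊤, Subgroup.map (QuotientGroup.mk' N) ⊤⁆ := by
          rw [Subgroup.map_top_of_surjective _ hsur]
      _ = Subgroup.map (QuotientGroup.mk' N) ⁅⊤, ⊤⁆ := (Subgroup.map_commutator _ _ _).symm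
      _ = Subgroup.map (QuotientGroup.mk' N) ⊤ := by rw [h]
      _ = ⊤ := Subgroup.map_top_of_surjective _ hsur
  haveI := subsingleton_of_perfect_solvable hq hs
  rw [Subgroup.eq_top_iff']
  intro x
  exact (QuotientGroup.eq_one_iff x).mp (Subsingleton.elim _ _)

theorem isSolvable_quotient_of_sup {A B T : Subgroup G} [hN : (A.subgroupOf T).Normal]
    (hBT : B ≤ T) (hT : T = A ⊔ B) (hB : IsSolvable ↥B) :
    IsSolvable (↥T ⧸ A.subgroupOf T) := by
  haveI : Group.IsSolvable ↥B := hB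
  have hsub : Subgroup.closure ((A : Set G) ∪ (B : Set G)) ≤ T := by
    rw [Subgroup.closure_union, A.closure_eq, B.closure_eq, ← hT]
  refine solvable_of_surjective
    (f := (QuotientGroup.mk' (A.subgroupOf T)).comp (Subgroup.inclusion hBT)) ?_
  intro q
  obtain ⟨t, rfl⟩ := QuotientGroup.mk'_surjective (A.subgroupOf T) q
  have hmem : (t : G) ∈ Subgroup.closure ((A : Set G) ∪ (B : Set G)) := by
    rw [Subgroup.closure_union, A.closure_eq, B.closure_eq, ← hT]
    exact t.2
  have key : ∀ (x : G), x ∈ Subgroup.closure ((A : Set G) ∪ (B : Set G)) →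
      ∀ (hxT : x ∈ T), ∃ b : ↥B,
        ((QuotientGroup.mk' (A.subgroupOf T)).comp (Subgroup.inclusion hBT)) b
          = QuotientGroup.mk' (A.subgroupOf T) ⟨x, hxT⟩ := by
    intro x hx
    induction hx using Subgroup.closure_induction with
    | mem y hy =>
        intro hyT
        rcases hy with hyA | hyB
        · refine ⟨1, ?_⟩
          rw [map_one]
          have hmem' : (⟨y, hyT⟩ : ↥T) ∈ A.subgroupOf T := by
            rwa [Subgroup.mem_subgroupOf]
          exact ((QuotientGroup.eq_one_iff _).mpr hmem').symm
        · exact ⟨⟨y, hyB⟩, rfl⟩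
    | one =>
        intro h1T
        refine ⟨1, ?_⟩
        rw [map_one]
        have h1 : (⟨(1 : G), h1T⟩ : ↥T) = 1 := rfl
        rw [h1, map_one]
    | mul y z hy hz ihy ihz =>
        intro hyzT
        obtain ⟨b1, e1⟩ := ihy (hsub hy)
        obtain ⟨b2, e2⟩ := ihz (hsub hz)
        refine ⟨b1 * b2, ?_⟩
        rw [map_mul, e1, e2, ← map_mul]
        rfl
    | inv y hy ihy =>
        intro hyT
        obtain ⟨b, e⟩ := ihy (hsub hy)
        refine ⟨b⁻¹, ?_⟩
        rw [map_inv, e, ← map_inv]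
        rfl
  exact key t hmem t.2

theorem normalIn_sup_solvable {A B T : Subgroup G} (hA : NormalIn A T) (hB : NormalIn B T)
    (sA : IsSolvable ↥A) (sB : IsSolvable ↥B) :
    NormalIn (A ⊔ B) T ∧ IsSolvable ↥(A ⊔ B) := by
  constructor
  · refine ⟨sup_le hA.1 hB.1, fun b hb a ha => ?_⟩
    have ha' : a ∈ Subgroup.closure ((A : Set G) ∪ (B : Set G)) := by
      rwa [Subgroup.closure_union, A.closure_eq, B.closure_eq]
    clear ha
    induction ha' using Subgroup.closure_induction with
    | mem x hx =>
        rcases hx with h | h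
        · exact Subgroup.mem_sup_left (hA.2 b hb x h)
        · exact Subgroup.mem_sup_right (hB.2 b hb x h)
    | one => simpa using Subgroup.one_mem _
    | mul x y _ _ hx hy =>
        have e : b * (x * y) * b⁻¹ = (b * x * b⁻¹) * (b * y * b⁻¹) := by group
        rw [e]; exact Subgroup.mul_mem _ hx hy
    | inv x _ hx =>
        have e : b * x⁻¹ * b⁻¹ = (b * x * b⁻¹)⁻¹ := by group
        rw [e]; exact Subgroup.inv_mem _ hx
  · have hA' : NormalIn A (A ⊔ B) :=
      ⟨le_sup_left, fun b hb a ha => hA.2 b (sup_le hA.1 hB.1 hb) a ha⟩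
    haveI := hA'.subgroupOf_normal
    haveI hq : Group.IsSolvable (↥(A ⊔ B) ⧸ A.subgroupOf (A ⊔ B)) :=
      isSolvable_quotient_of_sup le_sup_right rfl sB
    haveI : Group.IsSolvable ↥(A.subgroupOf (A ⊔ B)) :=
      isSolvable_of_mulEquiv (Subgroup.subgroupOfEquivOfLe le_sup_left).symm sA
    exact solvable_of_ker_le_range (A.subgroupOf (A ⊔ B)).subtype
      (QuotientGroup.mk' (A.subgroupOf (A ⊔ B)))
      (by rw [QuotientGroup.ker_mk', Subgroup.range_subtype])

theorem normalIn_bot (T : Subgroup G) : NormalIn ⊥ T := by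
  refine ⟨bot_le, fun b _ a ha => ?_⟩
  rw [Subgroup.mem_bot] at ha ⊢
  rw [ha]; group

theorem isSolvable_bot : IsSolvable ↥(⊥ : Subgroup G) := by
  refine isSolvable_of_comm fun a b => ?_
  have ha := a.2; have hb := b.2
  rw [Subgroup.mem_bot] at ha hb
  apply Subtype.ext
  simp only [Subgroup.coe_mul, ha, hb, one_mul, mul_one]

theorem finset_sup_solvable {T : Subgroup G} (s : Finset (Subgroup G))
    (hs : ∀ A ∈ s, NormalIn A T ∧ IsSolvable ↥A) :
    NormalIn (s.sup id) T ∧ IsSolvable ↥(s.sup id) := by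
  classical
  induction s using Finset.induction with
  | empty =>
      rw [Finset.sup_empty]
      exact ⟨normalIn_bot T, isSolvable_bot⟩
  | @insert A s' hA ih =>
      rw [Finset.sup_insert]
      have h1 := hs A (Finset.mem_insert_self A s')
      have h2 := ih fun B hB => hs B (Finset.mem_insert_of_mem hB)
      have := normalIn_sup_solvable h1.1 h2.1 h1.2 h2.2
      exact ⟨this.1, this.2⟩

theorem sol_eq_sSup : sol G = sSup {N : Subgroup G | N.Normal ∧ IsSolvable ↥N} := by
  apply le_antisymm
  · refine (Subgroup.closure_le _).mpr ?_
    rintro x ⟨N, hN, hNs, hxN⟩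
    exact (le_sSup (show N ∈ {N : Subgroup G | N.Normal ∧ IsSolvable ↥N} from ⟨hN, hNs⟩)) hxN
  · refine sSup_le ?_
    rintro N ⟨hN, hNs⟩ x hx
    exact Subgroup.subset_closure ⟨N, hN, hNs, hx⟩

theorem sol_solvable [Finite G] : IsSolvable ↥(sol G) := by
  classical
  haveI : Finite (Subgroup G) :=
    Finite.of_injective (fun H => (H : Set G)) SetLike.coe_injective
  have hfin : {N : Subgroup G | N.Normal ∧ IsSolvable ↥N}.Finite := Set.toFinite _
  have h := finset_sup_solvable (T := (⊤ : Subgroup G)) hfin.toFinset (by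
    intro A hA
    rw [Set.Finite.mem_toFinset] at hA
    exact ⟨NormalIn.of_normal hA.1 ⊤ le_top, hA.2⟩)
  have he : sol G = hfin.toFinset.sup id := by
    rw [sol_eq_sSup, Finset.sup_id_eq_sSup, hfin.coe_toFinset]
  rw [he]
  exact h.2

theorem le_sol_of_normal_solvable {N : Subgroup G} (hN : N.Normal) (hNs : IsSolvable ↥N) :
    N ≤ sol G := fun x hx => Subgroup.subset_closure ⟨N, hN, hNs, hx⟩

theorem sol_quotient_eq_bot [Finite G] : sol (G ⧸ sol G) = ⊥ := by
  have key : ∀ N : Subgroup (G ⧸ sol G), N.Normal → IsSolvable ↥N → N = ⊥ := by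
    intro N hN hNs
    have hcomap : (N.comap (QuotientGroup.mk' (sol G))).Normal := hN.comap _
    have hsol : IsSolvable ↥(N.comap (QuotientGroup.mk' (sol G))) := by
      have hker : IsSolvable ↥(QuotientGroup.mk' (sol G)).ker := by
        have e : (QuotientGroup.mk' (sol G)).ker = sol G := QuotientGroup.ker_mk' _
        rw [e]; exact sol_solvable
      refine isSolvable_of_map_of_ker _ _ hker ?_
      rw [Subgroup.map_comap_eq_self_of_surjective (QuotientGroup.mk'_surjective _) N]
      exact hNs
    have hle : N.comap (QuotientGroup.mk' (sol G)) ≤ sol G :=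
      le_sol_of_normal_solvable hcomap hsol
    rw [← Subgroup.map_comap_eq_self_of_surjective (QuotientGroup.mk'_surjective (sol G)) N,
      Subgroup.map_eq_bot_iff, QuotientGroup.ker_mk']
    exact hle
  rw [eq_bot_iff]
  show Subgroup.closure _ ≤ ⊥
  refine (Subgroup.closure_le _).mpr ?_
  rintro x ⟨N, hN, hNs, hxN⟩
  have hNb := key N hN hNs
  rw [hNb] at hxN
  simpa using hxN

theorem subnormal_solvable_le_sol [Finite G] :
    ∀ {n : ℕ} {S : Subgroup G}, SubN n S ⊤ → IsSolvable ↥S → S ≤ sol G := by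
  intro n
  induction n with
  | zero =>
      intro S h hs
      have hS : S = ⊤ := h
      subst hS
      exact le_sol_of_normal_solvable inferInstance hs
  | succ n ih =>
      intro S h hs
      obtain ⟨T, hST, hT⟩ := h
      match n, hT with
      | 0, hT =>
          have hTt : T = ⊤ := hT
          subst hTt
          exact le_sol_of_normal_solvable hST.normal_of_top hs
      | Nat.succ m, hT =>
          obtain ⟨T₂, hTT2, hT2⟩ := hT
          classical
          haveI : Finite (Subgroup G) :=
            Finite.of_injective (fun H => (H : Set G)) SetLike.coe_injective
          -- conjugates of S by elements of T₂
          let conjS : ↥T₂ → Subgroup G :=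
            fun t => S.map (MulAut.conj (t : G)).toMonoidHom
          have hconj_le : ∀ t : ↥T₂, conjS t ≤ T := by
            rintro t x ⟨s, hsS, rfl⟩
            exact hTT2.2 (t : G) t.2 s (hST.1 hsS)
          have hconj_norm : ∀ t : ↥T₂, NormalIn (conjS t) T := by
            intro t
            refine ⟨hconj_le t, ?_⟩
            rintro b hb x ⟨s, hsS, rfl⟩
            have hbt : (t : G)⁻¹ * b * (t : G) ∈ T := by
              have := hTT2.2 ((t : G)⁻¹) (T₂.inv_mem t.2) b hb
              simpa [mul_assoc] using this
            have hi : ((t : G)⁻¹ * b * (t : G)) * s * ((t : G)⁻¹ * b * (t : G))⁻¹ ∈ S :=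
              hST.2 _ hbt s hsS
            refine ⟨_, hi, ?_⟩
            simp only [MulEquiv.coe_toMonoidHom, MulAut.conj_apply]
            group
          have hconj_sol : ∀ t : ↥T₂, IsSolvable ↥(conjS t) :=
            fun t => isSolvable_map _ hs
          set W : Subgroup G := ⨆ t : ↥T₂, conjS t with hW
          have hWs : NormalIn W T ∧ IsSolvable ↥W := by
            have hfin : (Set.range conjS).Finite := Set.toFinite _
            have hWe : W = hfin.toFinset.sup id := by
              rw [hW, ← sSup_range, Finset.sup_id_eq_sSup, hfin.coe_toFinset]
            rw [hWe]
            refine finset_sup_solvable _ ?_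
            intro A hA
            rw [Set.Finite.mem_toFinset] at hA
            obtain ⟨t, rfl⟩ := hA
            exact ⟨hconj_norm t, hconj_sol t⟩
          have hWT2 : NormalIn W T₂ := by
            refine ⟨hWs.1.1.trans hTT2.1, ?_⟩
            intro b hb a ha
            refine Subgroup.iSup_induction (C := fun x => b * x * b⁻¹ ∈ W) conjS ha ?_ ?_ ?_
            · rintro t x ⟨s, hsS, rfl⟩
              have : b * ((t : G) * s * (t : G)⁻¹) * b⁻¹
                  = (b * (t : G)) * s * (b * (t : G))⁻¹ := by group
              refine Subgroup.mem_iSup_of_mem ⟨b * (t : G), T₂.mul_mem hb t.2⟩ ?_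
              refine ⟨s, hsS, ?_⟩
              simp only [MulEquiv.coe_toMonoidHom, MulAut.conj_apply]
              group
            · simpa using W.one_mem
            · intro x y hx hy
              have e : b * (x * y) * b⁻¹ = (b * x * b⁻¹) * (b * y * b⁻¹) := by group
              rw [e]; exact W.mul_mem hx hy
          have hSW : S ≤ W := by
            intro x hx
            refine Subgroup.mem_iSup_of_mem (1 : ↥T₂) ?_
            refine ⟨x, hx, ?_⟩
            simp [MulAut.conj_apply]
          have hWsub : SubN (m + 1) W ⊤ := ⟨T₂, hWT2, hT2⟩
          exact hSW.trans (ih hWsub hWs.2)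

theorem map_subtype_top (B : Subgroup G) : Subgroup.map B.subtype ⊤ = B := by
  rw [← MonoidHom.range_eq_map, Subgroup.range_subtype]

theorem perfect_subgroup_iff {K : Subgroup G} :
    ⁅K, K⁆ = K ↔ ⁅(⊤ : Subgroup ↥K), (⊤ : Subgroup ↥K)⁆ = ⊤ := by
  have hinj := Subgroup.map_injective (f := K.subtype) K.subtype_injective
  constructor
  · intro h
    apply hinj
    rw [Subgroup.map_commutator, map_subtype_top, h]
  · intro h
    have h2 := congrArg (Subgroup.map K.subtype) h
    rwa [Subgroup.map_commutator, map_subtype_top] at h2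

theorem IsQuasisimple.not_isSolvable {H : Type*} [Group H] (hq : IsQuasisimple H) :
    ¬ IsSolvable H := by
  intro hs
  haveI := subsingleton_of_perfect_solvable hq.1 hs
  have h1 : Subsingleton (H ⧸ Subgroup.center H) :=
    (QuotientGroup.mk'_surjective _).subsingleton
  have h2 : Nontrivial (H ⧸ Subgroup.center H) := hq.2.toNontrivial
  exact not_subsingleton_iff_nontrivial.mpr h2 h1

theorem IsQuasisimple.normal_eq_top {H : Type*} [Group H] (hq : IsQuasisimple H)
    {M : Subgroup H} (hM : M.Normal) (hns : ¬ IsSolvable ↥M) : M = ⊤ := by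
  have hMn : (M.map (QuotientGroup.mk' (Subgroup.center H))).Normal :=
    hM.map _ (QuotientGroup.mk'_surjective _)
  rcases hq.2.eq_bot_or_eq_top_of_normal _ hMn with hb | ht
  · exfalso
    have hle : M ≤ Subgroup.center H := by
      have h2 := (Subgroup.map_eq_bot_iff _).mp hb
      rwa [QuotientGroup.ker_mk'] at h2
    refine hns (isSolvable_of_comm fun a b => Subtype.ext ?_)
    exact ((Subgroup.mem_center_iff.mp (hle a.2)) b.1).symm
  · have hsup : M ⊔ Subgroup.center H = ⊤ := by
      have h2 := congrArg (Subgroup.comap (QuotientGroup.mk' (Subgroup.center H))) ht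
      rwa [Subgroup.comap_map_eq, QuotientGroup.ker_mk', Subgroup.comap_top] at h2
    have hcomm : ⁅(⊤ : Subgroup H), (⊤ : Subgroup H)⁆ ≤ M := by
      rw [Subgroup.commutator_le]
      intro g _ h _
      have hZsur : ∀ q : H ⧸ M, ∃ z, z ∈ Subgroup.center H ∧ QuotientGroup.mk' M z = q := by
        intro q
        have hmt : Subgroup.map (QuotientGroup.mk' M) (Subgroup.center H) = ⊤ := by
          have h1 : Subgroup.map (QuotientGroup.mk' M) (M ⊔ Subgroup.center H) = ⊤ := by
            rw [hsup, Subgroup.map_top_of_surjective _ (QuotientGroup.mk'_surjective M)]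
          rw [Subgroup.map_sup] at h1
          have h2 : Subgroup.map (QuotientGroup.mk' M) M = ⊥ := by
            rw [Subgroup.map_eq_bot_iff, QuotientGroup.ker_mk']
          rwa [h2, bot_sup_eq] at h1
        have hq' : q ∈ Subgroup.map (QuotientGroup.mk' M) (Subgroup.center H) :=
          hmt ▸ Subgroup.mem_top q
        obtain ⟨z, hz, hzq⟩ := hq'
        exact ⟨z, hz, hzq⟩
      obtain ⟨z1, hz1, e1⟩ := hZsur (QuotientGroup.mk' M g)
      obtain ⟨z2, hz2, e2⟩ := hZsur (QuotientGroup.mk' M h)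
      have hker : QuotientGroup.mk' M ⁅g, h⁆ = 1 := by
        have hc : z1 * z2 * z1⁻¹ * z2⁻¹ = 1 := by
          have hcz := Subgroup.mem_center_iff.mp hz1 z2
          rw [← hcz]
          group
        calc QuotientGroup.mk' M ⁅g, h⁆
            = QuotientGroup.mk' M g * QuotientGroup.mk' M h * (QuotientGroup.mk' M g)⁻¹ *
              (QuotientGroup.mk' M h)⁻¹ := by
              rw [commutatorElement_def, map_mul, map_mul, map_mul, map_inv, map_inv]
          _ = QuotientGroup.mk' M z1 * QuotientGroup.mk' M z2 * (QuotientGroup.mk' M z1)⁻¹ *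
              (QuotientGroup.mk' M z2)⁻¹ := by rw [e1, e2]
          _ = QuotientGroup.mk' M (z1 * z2 * z1⁻¹ * z2⁻¹) := by
              rw [map_mul, map_mul, map_mul, map_inv, map_inv]
          _ = 1 := by rw [hc, map_one]
      have := (QuotientGroup.eq_one_iff _).mp hker
      exact this
    exact top_le_iff.mp (hq.1 ▸ hcomm)

theorem IsQuasisimple.subN_eq_top {H : Type*} [Group H] (hq : IsQuasisimple H) :
    ∀ {n : ℕ} {M : Subgroup H}, SubN n M ⊤ → ¬ IsSolvable ↥M → M = ⊤ := by
  intro n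
  induction n with
  | zero => intro M h _; exact h
  | succ n ih =>
      intro M h hns
      obtain ⟨T, hMT, hT⟩ := h
      have hTns : ¬ IsSolvable ↥T := fun hsT => hns (solvable_of_le hMT.1 hsT)
      have hTt : T = ⊤ := ih hT hTns
      subst hTt
      exact hq.normal_eq_top hMT.normal_of_top hns

theorem subN_subgroupOf {B : Subgroup G} :
    ∀ {n : ℕ} {A : Subgroup G}, SubN n A B → SubN n (A.subgroupOf B) (⊤ : Subgroup ↥B) := by
  have hsub : ∀ (m : ℕ) (X Y : Subgroup G), SubN m X Y →
      SubN m (X.subgroupOf B) (Y.subgroupOf B) := by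
    intro m
    induction m with
    | zero =>
        intro X Y h
        have hXY : X = Y := h
        show X.subgroupOf B = Y.subgroupOf B
        rw [hXY]
    | succ m ih =>
        intro X Y h
        obtain ⟨T, hXT, hT⟩ := h
        refine ⟨T.subgroupOf B, ⟨?_, ?_⟩, ih T Y hT⟩
        · intro x hx
          rw [Subgroup.mem_subgroupOf] at hx ⊢
          exact hXT.1 hx
        · intro b hb a ha
          rw [Subgroup.mem_subgroupOf] at hb ha ⊢
          exact hXT.2 b.1 hb a.1 ha
  intro n A h
  have h2 := hsub n A B h
  rwa [Subgroup.subgroupOf_self] at h2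

theorem map_comap_inf {G' : Type*} [Group G'] (f : G →* G') (A : Subgroup G') (B : Subgroup G) :
    Subgroup.map f (A.comap f ⊓ B) = A ⊓ Subgroup.map f B := by
  apply le_antisymm
  · rintro x ⟨y, ⟨hy1, hy2⟩, rfl⟩
    exact ⟨hy1, ⟨y, hy2, rfl⟩⟩
  · rintro x ⟨hx1, y, hy, rfl⟩
    exact ⟨y, ⟨hx1, hy⟩, rfl⟩

theorem isSimpleGroup_of_mulEquiv {X Y : Type*} [Group X] [Group Y] (e : X ≃* Y)
    (h : IsSimpleGroup X) : IsSimpleGroup Y := by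
  haveI := h.toNontrivial
  haveI : Nontrivial Y := e.symm.toEquiv.nontrivial
  refine ⟨fun N hN => ?_⟩
  have hN' : (N.comap e.toMonoidHom).Normal := hN.comap _
  rcases h.eq_bot_or_eq_top_of_normal _ hN' with hb | ht
  · left
    have h2 := congrArg (Subgroup.map e.toMonoidHom) hb
    rwa [Subgroup.map_comap_eq_self_of_surjective e.surjective, Subgroup.map_bot] at h2
  · right
    have h2 := congrArg (Subgroup.map e.toMonoidHom) ht
    rwa [Subgroup.map_comap_eq_self_of_surjective e.surjective,
      Subgroup.map_top_of_surjective _ e.surjective] at h2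

theorem conj_map_self {K : Subgroup G} {b : G} (hb : b ∈ K) :
    K.map (MulAut.conj b).toMonoidHom = K := by
  apply le_antisymm
  · rintro x ⟨k, hk, rfl⟩
    simp only [MulEquiv.coe_toMonoidHom, MulAut.conj_apply]
    exact K.mul_mem (K.mul_mem hb hk) (K.inv_mem hb)
  · intro x hx
    refine ⟨b⁻¹ * x * b, K.mul_mem (K.mul_mem (K.inv_mem hb) hx) hb, ?_⟩
    simp only [MulEquiv.coe_toMonoidHom, MulAut.conj_apply]
    group

theorem commutator_normalIn (K : Subgroup G) : NormalIn ⁅K, K⁆ K := by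
  constructor
  · rw [Subgroup.commutator_le]
    intro g hg h hh
    rw [commutatorElement_def]
    exact K.mul_mem (K.mul_mem (K.mul_mem hg hh) (K.inv_mem hg)) (K.inv_mem hh)
  · intro b hb a ha
    have h2 : b * a * b⁻¹ ∈ Subgroup.map (MulAut.conj b).toMonoidHom ⁅K, K⁆ := by
      refine ⟨a, ha, ?_⟩
      simp [MulAut.conj_apply]
    rwa [Subgroup.map_commutator, conj_map_self hb] at h2

theorem isSolvable_of_normalIn_quotient {A T : Subgroup G} (hA : NormalIn A T)
    [hN : (A.subgroupOf T).Normal] (hAs : IsSolvable ↥A)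
    (hq : IsSolvable (↥T ⧸ A.subgroupOf T)) : IsSolvable ↥T := by
  haveI : Group.IsSolvable (↥T ⧸ A.subgroupOf T) := hq
  haveI : Group.IsSolvable ↥(A.subgroupOf T) :=
    isSolvable_of_mulEquiv (Subgroup.subgroupOfEquivOfLe hA.1).symm hAs
  exact solvable_of_ker_le_range (A.subgroupOf T).subtype (QuotientGroup.mk' (A.subgroupOf T))
    (by rw [QuotientGroup.ker_mk', Subgroup.range_subtype])

theorem isSolvable_of_solvable_commutator {K : Subgroup G}
    (h : IsSolvable ↥(⁅K, K⁆ : Subgroup G)) : IsSolvable ↥K := by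
  haveI := (commutator_normalIn K).subgroupOf_normal
  refine isSolvable_of_normalIn_quotient (commutator_normalIn K) h ?_
  refine isSolvable_of_comm fun x y => ?_
  induction x using QuotientGroup.induction_on with | H a =>
  induction y using QuotientGroup.induction_on with | H b =>
  show QuotientGroup.mk (a * b) = QuotientGroup.mk (b * a)
  rw [QuotientGroup.eq]
  rw [Subgroup.mem_subgroupOf]
  have he : (((a * b)⁻¹ * (b * a) : ↥K) : G) = ⁅(b.1)⁻¹, (a.1)⁻¹⁆ := by
    rw [commutatorElement_def]
    simp only [Subgroup.coe_mul, Subgroup.coe_inv]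
    group
  rw [he]
  exact Subgroup.commutator_mem_commutator (K.inv_mem b.2) (K.inv_mem a.2)

end Machinery

/-- A subgroup `K` of a finite group `G` is a sol-component of `G` if and only if
`K` is a minimal member, under inclusion, of the set of nonsolvable subnormal
subgroups of `G`. -/
theorem isSolComponent_iff_minimal_nonsolvable_subnormal
    {G : Type*} [Group G] [Finite G] (K : Subgroup G) :
    K.IsSolComponent ↔
      (K.IsSubnormalIn ∧ ¬ IsSolvable K ∧
        ∀ L : Subgroup G, L.IsSubnormalIn → ¬ IsSolvable L → L ≤ K → L = K) := by
  classical
  have hπs : Function.Surjective (QuotientGroup.mk' (sol G)) :=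
    QuotientGroup.mk'_surjective _
  have hkersol : IsSolvable ↥(QuotientGroup.mk' (sol G)).ker := by
    have e : (QuotientGroup.mk' (sol G)).ker = sol G := QuotientGroup.ker_mk' _
    rw [e]; exact sol_solvable
  constructor
  · rintro ⟨hperf, hsubn, hcompsub, hq⟩
    obtain ⟨nK, hKsub⟩ := isSubnormalIn_iff_subN.mp hsubn
    refine ⟨hsubn, ?_, ?_⟩
    · intro hKs
      exact hq.not_isSolvable (isSolvable_map _ hKs)
    · intro L hLsub hLns hLK
      obtain ⟨nL, hLsubN⟩ := isSubnormalIn_iff_subN.mp hLsub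
      -- any nonsolvable subnormal subgroup of K has full image in K-bar
      have step1 : ∀ M : Subgroup G, (∃ m, SubN m M ⊤) → ¬ IsSolvable ↥M → M ≤ K →
          M.map (QuotientGroup.mk' (sol G)) = K.map (QuotientGroup.mk' (sol G)) := by
        rintro M ⟨m, hM⟩ hMns hMK
        have h1 : SubN m (M.map (QuotientGroup.mk' (sol G))) (⊤ : Subgroup (G ⧸ sol G)) := by
          have h1' := subN_map (QuotientGroup.mk' (sol G)) hM
          rwa [Subgroup.map_top_of_surjective _ hπs] at h1'
        have h2 : M.map (QuotientGroup.mk' (sol G)) ≤ K.map (QuotientGroup.mk' (sol G)) :=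
          Subgroup.map_mono hMK
        have h3 := subN_inf (K := K.map (QuotientGroup.mk' (sol G))) h1
        rw [inf_of_le_left h2, top_inf_eq] at h3
        have h4 := subN_subgroupOf h3
        have h5 : ¬ IsSolvable
            ↥((M.map (QuotientGroup.mk' (sol G))).subgroupOf
              (K.map (QuotientGroup.mk' (sol G)))) := by
          intro hs
          have hMbar : IsSolvable ↥(M.map (QuotientGroup.mk' (sol G))) :=
            isSolvable_of_mulEquiv (Subgroup.subgroupOfEquivOfLe h2) hs
          exact hMns (isSolvable_of_map_of_ker _ M hkersol hMbar)
        have h6 := hq.subN_eq_top h4 h5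
        have h7 := congrArg (Subgroup.map (K.map (QuotientGroup.mk' (sol G))).subtype) h6
        rwa [Subgroup.subgroupOf_map_subtype, map_subtype_top, inf_of_le_left h2] at h7
      have hLKchain : SubN nL L K := by
        have h := subN_inf (K := K) hLsubN
        rwa [inf_of_le_left hLK, top_inf_eq] at h
      have claim : ∀ n : ℕ, ∀ M : Subgroup G, SubN n M K → ¬ IsSolvable ↥M → M = K := by
        intro n
        induction n with
        | zero => intro M h _; exact h
        | succ n ih =>
            intro M h hMns
            obtain ⟨T, hMT, hT⟩ := h
            have hTns : ¬ IsSolvable ↥T := fun hs => hMns (solvable_of_le hMT.1 hs)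
            have hTK : T = K := ih T hT hTns
            rw [hTK] at hMT hT
            have hMK : M ≤ K := hMT.1
            have hMmap : M.map (QuotientGroup.mk' (sol G)) = K.map (QuotientGroup.mk' (sol G)) :=
              step1 M ⟨n + 1 + nK,
                subN_trans (show SubN (n+1) M K from ⟨K, hMT, hT⟩) hKsub⟩ hMns hMK
            have hsup : K = M ⊔ (sol G ⊓ K) := by
              apply le_antisymm
              · intro k hk
                have hkmem : QuotientGroup.mk' (sol G) k ∈ M.map (QuotientGroup.mk' (sol G)) := by
                  rw [hMmap]; exact ⟨k, hk, rfl⟩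
                obtain ⟨mm, hm, hmk⟩ := hkmem
                have hmem : mm⁻¹ * k ∈ sol G := by
                  have hker : QuotientGroup.mk' (sol G) (mm⁻¹ * k) = 1 := by
                    rw [map_mul, map_inv, hmk]
                    exact inv_mul_cancel _
                  have := (QuotientGroup.eq_one_iff (mm⁻¹ * k)).mp hker
                  exact this
                have hke : k = mm * (mm⁻¹ * k) := by group
                rw [hke]
                exact Subgroup.mul_mem _ (Subgroup.mem_sup_left hm)
                  (Subgroup.mem_sup_right ⟨hmem, K.mul_mem (K.inv_mem (hMK hm)) hk⟩)
              · exact sup_le hMK inf_le_right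
            haveI := hMT.subgroupOf_normal
            have hsolB : IsSolvable ↥(sol G ⊓ K) := solvable_of_le inf_le_left sol_solvable
            have hqsolv : IsSolvable (↥K ⧸ M.subgroupOf K) :=
              isSolvable_quotient_of_sup inf_le_right hsup hsolB
            have hKperf : ⁅(⊤ : Subgroup ↥K), (⊤ : Subgroup ↥K)⁆ = ⊤ :=
              perfect_subgroup_iff.mp hperf
            have htop := eq_top_of_perfect_of_solvable_quotient hKperf (M.subgroupOf K) hqsolv
            have h8 := congrArg (Subgroup.map K.subtype) htop
            rwa [Subgroup.subgroupOf_map_subtype, map_subtype_top, inf_of_le_left hMK] at h8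
      exact claim nL L hLKchain hLns
  · rintro ⟨hsubn, hns, hmin⟩
    obtain ⟨nK, hKsub⟩ := isSubnormalIn_iff_subN.mp hsubn
    -- K is perfect
    have hperf : ⁅K, K⁆ = K := by
      have hnormal : NormalIn ⁅K, K⁆ K := commutator_normalIn K
      have hsubn' : (⁅K, K⁆ : Subgroup G).IsSubnormalIn :=
        isSubnormalIn_iff_subN.mpr ⟨nK + 1, ⟨K, hnormal, hKsub⟩⟩
      have hns' : ¬ IsSolvable ↥(⁅K, K⁆ : Subgroup G) :=
        fun hs => hns (isSolvable_of_solvable_commutator hs)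
      exact hmin ⁅K, K⁆ hsubn' hns' hnormal.1
    have hKbarsub : SubN nK (K.map (QuotientGroup.mk' (sol G))) (⊤ : Subgroup (G ⧸ sol G)) := by
      have h := subN_map (QuotientGroup.mk' (sol G)) hKsub
      rwa [Subgroup.map_top_of_surjective _ hπs] at h
    set Kbar := K.map (QuotientGroup.mk' (sol G)) with hKbar
    have hKbar_ne_bot : Kbar ≠ ⊥ := by
      intro h
      rw [Subgroup.map_eq_bot_iff, QuotientGroup.ker_mk'] at h
      exact hns (solvable_of_le h sol_solvable)
    -- all normal subgroups of K-bar are trivial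
    have hsimple : ∀ N : Subgroup ↥Kbar, N.Normal → N = ⊥ ∨ N = ⊤ := by
      intro N hN
      set N' := N.map Kbar.subtype with hN'def
      have hN'le : N' ≤ Kbar := Subgroup.map_subtype_le N
      have hN'normalIn : NormalIn N' Kbar := by
        refine ⟨hN'le, ?_⟩
        rintro b hb a ⟨x, hx, rfl⟩
        exact ⟨⟨b, hb⟩ * x * ⟨b, hb⟩⁻¹, hN.conj_mem x hx ⟨b, hb⟩, rfl⟩
      have hN'sub : SubN (nK + 1) N' (⊤ : Subgroup (G ⧸ sol G)) :=
        ⟨Kbar, hN'normalIn, hKbarsub⟩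
      by_cases hcase : IsSolvable ↥N'
      · left
        have hb : N' ≤ sol (G ⧸ sol G) := subnormal_solvable_le_sol hN'sub hcase
        rw [sol_quotient_eq_bot, le_bot_iff] at hb
        rw [hN'def] at hb
        apply Subgroup.map_injective (Subgroup.subtype_injective Kbar)
        rw [Subgroup.map_bot]
        exact hb
      · right
        set L := (N'.comap (QuotientGroup.mk' (sol G))) ⊓ K with hLdef
        have hLK : L ≤ K := inf_le_right
        have hLmap : L.map (QuotientGroup.mk' (sol G)) = N' := by
          rw [hLdef, map_comap_inf, ← hKbar, inf_of_le_left hN'le]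

        have hLns : ¬ IsSolvable ↥L := by
          intro h
          exact hcase (by rw [← hLmap]; exact isSolvable_map _ h)
        have hLsub : L.IsSubnormalIn := by
          refine isSubnormalIn_iff_subN.mpr ⟨(nK + 1) + nK, subN_trans ?_ hKsub⟩
          have h1 := subN_comap (QuotientGroup.mk' (sol G)) hN'sub
          rw [Subgroup.comap_top] at h1
          have h2 := subN_inf (K := K) h1
          rwa [top_inf_eq] at h2
        have hLeq : L = K := hmin L hLsub hLns hLK
        have hfull : N' = Kbar := by rw [← hLmap, hLeq]
        apply Subgroup.map_injective (Subgroup.subtype_injective Kbar)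
        rw [map_subtype_top]
        exact hfull
    haveI hnontriv : Nontrivial ↥Kbar :=
      (Subgroup.nontrivial_iff_ne_bot _).mpr hKbar_ne_bot
    haveI hsimpleG : IsSimpleGroup ↥Kbar :=
      ⟨fun N hN => hsimple N hN⟩
    have hcent : Subgroup.center ↥Kbar = ⊥ := by
      rcases hsimple (Subgroup.center _) inferInstance with h | h
      · exact h
      · exfalso
        have hcomm : IsSolvable ↥Kbar :=
          isSolvable_of_comm fun a b =>
            ((Subgroup.mem_center_iff.mp (h ▸ Subgroup.mem_top a)) b).symm
        exact hns (isSolvable_of_map_of_ker _ K hkersol (hKbar ▸ hcomm))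
    have hquasi : IsQuasisimple ↥Kbar := by
      constructor
      · refine perfect_subgroup_iff.mp ?_
        rw [hKbar, ← Subgroup.map_commutator, hperf]
      · refine isSimpleGroup_of_mulEquiv ?_ hsimpleG
        exact (QuotientGroup.quotientBot (G := ↥Kbar)).symm.trans
          (QuotientGroup.quotientMulEquivOfEq hcent.symm)
    exact ⟨hperf, hsubn, isSubnormalIn_iff_subN.mpr ⟨nK, hKbarsub⟩, hquasi⟩
end

section
/- Let G be a finite group, K a sol-component of G, and N a subnormal subgroup of G. Then K ≤ N or N ≤ N_G(K). -/
open Subgroup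
open scoped Pointwise

universe u

variable {G : Type u} [Group G]

/-- Subnormal chain of depth `n`, with elementwise normality. -/
def SN : ℕ → Subgroup G → Prop
  | 0, H => H = ⊤
  | (n+1), H => ∃ M : Subgroup G, H ≤ M ∧ (∀ m ∈ M, ∀ h ∈ H, m * h * m⁻¹ ∈ H) ∧ SN n M

theorem SN_of_chain (n : ℕ) (c : Fin (n + 1) → Subgroup G)
    (h0 : c 0 = H) (hlast : c (Fin.last n) = ⊤)
    (hc : ∀ i : Fin n, c i.castSucc ≤ c i.succ ∧ ((c i.castSucc).subgroupOf (c i.succ)).Normal) :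
    SN n H := by
  induction n generalizing H with
  | zero => exact h0 ▸ hlast
  | succ n ih =>
    refine ⟨c 1, ?_, ?_, ?_⟩
    · have := (hc 0).1
      simpa [h0, Fin.castSucc_zero, Fin.succ_zero_eq_one] using this
    · intro m hm h hh
      have hle := (hc 0).1
      rw [Fin.castSucc_zero, Fin.succ_zero_eq_one] at hle
      have hnorm := (hc 0).2
      rw [Fin.castSucc_zero, Fin.succ_zero_eq_one] at hnorm
      rw [← h0] at hh
      have hhc : h ∈ c 1 := hle hh
      have := hnorm.conj_mem ⟨h, hhc⟩ (by simpa [mem_subgroupOf] using hh) ⟨m, hm⟩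
      rw [mem_subgroupOf] at this
      simpa [h0] using this
    · refine ih (c := fun i => c i.succ) rfl ?_ ?_
      · rw [← hlast]; congr 1
      · intro i
        have := hc i.succ
        constructor
        · have h1 := this.1
          rwa [Fin.castSucc_fin_succ] at h1
        · have h2 := this.2
          rwa [Fin.castSucc_fin_succ] at h2

theorem exists_SN_of_isSubnormalIn {H : Subgroup G} (h : H.IsSubnormalIn) : ∃ n, SN n H := by
  obtain ⟨n, c, h0, hlast, hc⟩ := h
  exact ⟨n, SN_of_chain n c h0 hlast hc⟩

/-- intersecting a subnormal chain with a subgroup -/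
theorem SN.inf_subgroupOf {n : ℕ} {K : Subgroup G} (h : SN n K) (H : Subgroup G) :
    SN n ((K ⊓ H).subgroupOf H) := by
  induction n generalizing K with
  | zero => rw [show K = ⊤ from h, top_inf_eq, subgroupOf_self]; rfl
  | succ n ih =>
    obtain ⟨M, hKM, hnorm, hM⟩ := h
    refine ⟨(M ⊓ H).subgroupOf H, ?_, ?_, ih hM⟩
    · intro x hx
      rw [mem_subgroupOf] at hx ⊢
      exact ⟨hKM hx.1, hx.2⟩
    · intro m hm k hk
      rw [mem_subgroupOf] at hm hk ⊢
      refine ⟨?_, (m * k * m⁻¹).2⟩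
      simpa using hnorm _ hm.1 _ hk.1

theorem SN.subgroupOf {n : ℕ} {K H : Subgroup G} (h : SN n K) (hKH : K ≤ H) :
    SN n (K.subgroupOf H) := by
  have := h.inf_subgroupOf H
  rwa [inf_of_le_left hKH] at this

theorem SN.map {G' : Type u} [Group G'] {n : ℕ} {K : Subgroup G} (h : SN n K)
    (f : G →* G') (hf : Function.Surjective f) : SN n (K.map f) := by
  induction n generalizing K with
  | zero =>
    show K.map f = ⊤
    rw [show K = ⊤ from h, ← MonoidHom.range_eq_map, MonoidHom.range_eq_top]
    exact hf
  | succ n ih =>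
    obtain ⟨M, hKM, hnorm, hM⟩ := h
    refine ⟨M.map f, Subgroup.map_mono hKM, ?_, ih hM⟩
    rintro m hm k hk
    obtain ⟨m, hm', rfl⟩ := hm
    obtain ⟨k, hk', rfl⟩ := hk
    refine ⟨m * k * m⁻¹, hnorm m hm' k hk', by simp⟩

theorem SN_rev {n : ℕ} {K : Subgroup G} (h : SN (n + 1) K) :
    ∃ M : Subgroup G, M.Normal ∧ K ≤ M ∧ SN n (K.subgroupOf M) := by
  induction n generalizing K with
  | zero =>
    obtain ⟨M, hKM, hnorm, hM⟩ := h
    have : K.Normal := ⟨fun k hk g => hnorm g (by rw [show M = ⊤ from hM]; trivial) k hk⟩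
    exact ⟨K, this, le_rfl, subgroupOf_self K⟩
  | succ n ih =>
    obtain ⟨M₁, hKM₁, hnorm, hM₁⟩ := h
    obtain ⟨M, hMnorm, hM₁M, hSN⟩ := ih hM₁
    refine ⟨M, hMnorm, hKM₁.trans hM₁M, ?_⟩
    refine ⟨M₁.subgroupOf M, ?_, ?_, hSN⟩
    · intro x hx; rw [mem_subgroupOf] at hx ⊢; exact hKM₁ hx
    · intro m hm k hk
      rw [mem_subgroupOf] at hm hk ⊢
      exact hnorm _ hm _ hk


theorem isSolvable_of_le {T S : Subgroup G} (h : T ≤ S) (hS : IsSolvable ↥S) :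
    IsSolvable ↥T :=
  haveI : Group.IsSolvable ↥S := hS
  solvable_of_solvable_injective (inclusion_injective h)

theorem map_subtype_top_s1 (H : Subgroup G) : (⊤ : Subgroup ↥H).map H.subtype = H := by
  rw [← MonoidHom.range_eq_map, range_subtype]

/-- a perfect subgroup transfers to a perfect intrinsic group, and conversely -/
theorem perfect_top_iff {K : Subgroup G} :
    ⁅(⊤ : Subgroup ↥K), (⊤ : Subgroup ↥K)⁆ = (⊤ : Subgroup ↥K) ↔ ⁅K, K⁆ = K := by
  constructor
  · intro h
    have := congrArg (Subgroup.map K.subtype) h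
    rwa [Subgroup.map_commutator, map_subtype_top_s1] at this
  · intro h
    apply Subgroup.map_injective K.subtype_injective
    rwa [Subgroup.map_commutator, map_subtype_top_s1]

/-- a perfect subgroup of a solvable subgroup is trivial -/
theorem perfect_eq_bot {P T : Subgroup G} (hPT : P ≤ T) (hT : IsSolvable ↥T)
    (hP : ⁅P, P⁆ = P) : P = ⊥ := by
  have hsolv : IsSolvable ↥P := isSolvable_of_le hPT hT
  obtain ⟨k, hk⟩ := hsolv.solvable
  have htop : ∀ n, derivedSeries ↥P n = ⊤ := by
    intro n
    induction n with
    | zero => rfl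
    | succ n ih => rw [derivedSeries_succ, ih]; exact perfect_top_iff.mpr hP
  have : (⊤ : Subgroup ↥P) = ⊥ := by rw [← htop k, hk]
  rw [eq_bot_iff]
  intro x hx
  have : (⟨x, hx⟩ : ↥P) ∈ (⊥ : Subgroup ↥P) := this ▸ mem_top _
  simpa [Subgroup.mem_bot] using congrArg (Subtype.val) (this)

/-- Key tool: a perfect subgroup inside `N ⊔ T` with `N` normal and `T` solvable
lies in `N`. -/
theorem perfect_le_of_le_sup {P N T : Subgroup G} (hN : N.Normal)
    (hP : ⁅P, P⁆ = P) (hT : IsSolvable ↥T) (h : P ≤ N ⊔ T) : P ≤ N := by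
  set f := QuotientGroup.mk' N with hf
  have hmap : P.map f ≤ T.map f := by
    calc P.map f ≤ (N ⊔ T).map f := Subgroup.map_mono h
    _ = N.map f ⊔ T.map f := Subgroup.map_sup _ _ _
    _ = ⊥ ⊔ T.map f := by
        rw [(Subgroup.map_eq_bot_iff _).mpr (QuotientGroup.ker_mk' N).ge]
    _ = T.map f := bot_sup_eq _
  have hTsolv : IsSolvable ↥(T.map f) :=
    haveI : Group.IsSolvable ↥T := hT
    solvable_of_surjective (f.subgroupMap_surjective T)
  have : P.map f = ⊥ :=
    perfect_eq_bot hmap hTsolv (by rw [← Subgroup.map_commutator, hP])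
  rw [← QuotientGroup.ker_mk' N]
  exact (Subgroup.map_eq_bot_iff _).mp this


theorem sup_subgroupOf {A B H : Subgroup G} (hA : A ≤ H) (hB : B ≤ H) :
    (A ⊔ B).subgroupOf H = A.subgroupOf H ⊔ B.subgroupOf H := by
  apply Subgroup.map_injective H.subtype_injective
  rw [Subgroup.map_sup, subgroupOf_map_subtype, subgroupOf_map_subtype, subgroupOf_map_subtype,
    inf_of_le_left hA, inf_of_le_left hB, inf_of_le_left (sup_le hA hB)]

theorem card_lt_of_ne_top [Finite G] {M : Subgroup G} (h : M ≠ ⊤) :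
    Nat.card ↥M < Nat.card G := by
  obtain ⟨x, hx⟩ : ∃ x, x ∉ M := by
    by_contra hc
    push_neg at hc
    exact h (Subgroup.eq_top_iff' M |>.mpr hc)
  have h1 : Nat.card ↥M = (M : Set G).ncard := Nat.card_coe_set_eq _
  have h2 : Nat.card G = (Set.univ : Set G).ncard := (Set.ncard_univ G).symm
  rw [h1, h2]
  apply Set.ncard_lt_ncard _ (Set.finite_univ)
  exact ⟨Set.subset_univ _, fun hs => hx (hs (Set.mem_univ x))⟩

theorem eq_of_le_of_card_le' [Finite G] {A B : Subgroup G} (h : A ≤ B)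
    (hc : Nat.card ↥B ≤ Nat.card ↥A) : A = B := by
  apply SetLike.coe_injective
  apply Set.eq_of_subset_of_ncard_le h _ (Set.toFinite _)
  rwa [← Nat.card_coe_set_eq, ← Nat.card_coe_set_eq]

theorem map_center_mulEquiv {H H' : Type u} [Group H] [Group H'] (e : H ≃* H') :
    (Subgroup.center H).map e.toMonoidHom = Subgroup.center H' := by
  ext y
  simp only [Subgroup.mem_map]
  constructor
  · rintro ⟨x, hx, rfl⟩
    rw [Subgroup.mem_center_iff] at hx ⊢
    intro g
    have := congrArg e (hx (e.symm g))
    simpa [map_mul] using this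
  · intro hy
    refine ⟨e.symm y, ?_, by simp⟩
    rw [Subgroup.mem_center_iff] at hy ⊢
    intro g
    have := congrArg e.symm (hy (e g))
    simpa [map_mul] using this

theorem isSimpleGroup_mulEquiv {H H' : Type u} [Group H] [Group H'] (e : H ≃* H')
    (hs : IsSimpleGroup H) : IsSimpleGroup H' := by
  have : Nontrivial H' := e.symm.toEquiv.nontrivial
  constructor
  intro N hN
  have hN' : (N.map e.symm.toMonoidHom).Normal := hN.map _ e.symm.surjective
  have hmapback : (N.map e.symm.toMonoidHom).map e.toMonoidHom = N := by
    rw [Subgroup.map_map]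
    have : (e.toMonoidHom.comp e.symm.toMonoidHom) = MonoidHom.id H' := by
      ext x; simp
    rw [this, Subgroup.map_id]
  rcases hs.eq_bot_or_eq_top_of_normal _ hN' with h | h
  · left; rw [← hmapback, h]; exact Subgroup.map_bot _
  · right; rw [← hmapback, h, ← MonoidHom.range_eq_map, MonoidHom.range_eq_top]
    exact e.surjective

theorem isQuasisimple_mulEquiv {H H' : Type u} [Group H] [Group H'] (e : H ≃* H')
    (hq : IsQuasisimple H) : IsQuasisimple H' := by
  constructor
  · have := congrArg (Subgroup.map e.toMonoidHom) hq.1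
    rw [Subgroup.map_commutator] at this
    rwa [← MonoidHom.range_eq_map, MonoidHom.range_eq_top_of_surjective _ e.surjective] at this
  · have equot : (H ⧸ Subgroup.center H) ≃* (H' ⧸ Subgroup.center H') :=
      QuotientGroup.congr _ _ e (map_center_mulEquiv e)
    exact isSimpleGroup_mulEquiv equot hq.2




theorem isSolvable_sup {R N : Subgroup G} (hR : R.Normal) (hRs : IsSolvable ↥R)
    (hNs : IsSolvable ↥N) : IsSolvable ↥(R ⊔ N) := by
  set J := R ⊔ N with hJ
  have hRJ : R ≤ J := le_sup_left
  have hR' : (R.subgroupOf J).Normal := by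
    constructor
    intro n hn g
    rw [mem_subgroupOf] at hn ⊢
    simpa using hR.conj_mem _ hn g
  have hR's : IsSolvable ↥(R.subgroupOf J) :=
    haveI : Group.IsSolvable ↥R := hRs
    solvable_of_solvable_injective (f := (subgroupOfEquivOfLe hRJ).toMonoidHom)
      (subgroupOfEquivOfLe hRJ).injective
  have hquot : IsSolvable (↥J ⧸ R.subgroupOf J) := by
    have hsurj : Function.Surjective
        ((QuotientGroup.mk' (R.subgroupOf J)).comp (inclusion (le_sup_right : N ≤ J))) := by
      intro q
      induction q using QuotientGroup.induction_on with
      | H x =>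
        obtain ⟨x, hx⟩ := x
        have : x ∈ (R : Set G) * (N : Set G) := by rw [← Subgroup.normal_mul]; exact hx
        obtain ⟨r, hr, n, hn, rfl⟩ := this
        refine ⟨⟨n, hn⟩, ?_⟩
        show QuotientGroup.mk _ = QuotientGroup.mk _
        rw [QuotientGroup.eq]
        rw [mem_subgroupOf]
        have h2 : n⁻¹ * (r * n) ∈ R := by
          have := hR.conj_mem r hr n⁻¹
          simpa [mul_assoc] using this
        simpa using h2
    haveI : Group.IsSolvable ↥N := hNs
    exact solvable_of_surjective hsurj
  haveI : Group.IsSolvable ↥(R.subgroupOf J) := hR's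
  haveI : Group.IsSolvable (↥J ⧸ R.subgroupOf J) := hquot
  exact solvable_of_ker_le_range (R.subgroupOf J).subtype (QuotientGroup.mk' (R.subgroupOf J))
    (by rw [QuotientGroup.ker_mk', range_subtype])

theorem isSolvable_sol (G : Type u) [Group G] [Finite G] : IsSolvable ↥(sol G) := by
  have hfin : Finite (Subgroup G) := Finite.of_injective _ SetLike.coe_injective
  set s : Set (Subgroup G) := {R | R.Normal ∧ IsSolvable ↥R} with hs
  have hbot : (⊥ : Subgroup G) ∈ s := by
    refine ⟨inferInstance, ⟨0, ?_⟩⟩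
    ext x
    simp [Subsingleton.elim x 1]
  obtain ⟨R, hRs, hRmax⟩ := Set.Finite.exists_maximalFor id s (Set.toFinite s) ⟨⊥, hbot⟩
  have hall : ∀ Q ∈ s, Q ≤ R := by
    intro Q hQ
    have hsup : R ⊔ Q ∈ s := by
      have := hRs.1
      have := hQ.1
      exact ⟨inferInstance, isSolvable_sup hRs.1 hRs.2 hQ.2⟩
    have := hRmax hsup (le_sup_left : R ≤ R ⊔ Q)
    simp only [id] at this
    exact le_sup_right.trans this
  have hsolR : sol G ≤ R := by
    rw [sol, Subgroup.closure_le]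
    rintro x ⟨Nx, hnorm, hsolv, hx⟩
    exact hall Nx ⟨hnorm, hsolv⟩ hx
  exact isSolvable_of_le hsolR hRs.2

theorem dichotomy {K N : Subgroup G} (hq : IsQuasisimple ↥K) (hN : N.Normal) :
    K ≤ N ∨ (K ⊓ N) ≤ Subgroup.centralizer (K : Set G) := by
  set A : Subgroup ↥K := (K ⊓ N).subgroupOf K with hA
  have hAnorm : A.Normal := by
    constructor
    intro a ha g
    rw [hA, mem_subgroupOf] at ha ⊢
    refine ⟨(g * a * g⁻¹).2, ?_⟩
    have := hN.conj_mem _ ha.2 ↑g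
    simpa using this
  set Z := Subgroup.center ↥K with hZ
  have hZsolv : IsSolvable ↥Z := isSolvable_of_comm (fun a b => Subtype.ext ((Subgroup.mem_center_iff.mp a.2 ↑b).symm))
  have hmapnorm : ((A.map (QuotientGroup.mk' Z))).Normal :=
    hAnorm.map _ (QuotientGroup.mk'_surjective Z)
  rcases hq.2.eq_bot_or_eq_top_of_normal _ hmapnorm with h | h
  · right
    have hle : A ≤ Z := by
      have := (Subgroup.map_eq_bot_iff _).mp h
      rwa [QuotientGroup.ker_mk'] at this
    intro x hx
    rw [Subgroup.mem_centralizer_iff]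
    intro k hk
    have hxA : (⟨x, hx.1⟩ : ↥K) ∈ A := mem_subgroupOf.mpr hx
    have := mem_center_iff.mp (hle hxA) ⟨k, hk⟩
    exact congrArg Subtype.val this
  · left
    have htop : A ⊔ Z = ⊤ := by
      have := congrArg (Subgroup.comap (QuotientGroup.mk' Z)) h
      rwa [Subgroup.comap_map_eq, QuotientGroup.ker_mk', Subgroup.comap_top] at this
    have hfull : (⊤ : Subgroup ↥K) ≤ A :=
      perfect_le_of_le_sup hAnorm hq.1 hZsolv htop.ge
    intro k hk
    have : (⟨k, hk⟩ : ↥K) ∈ A := hfull (mem_top _)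
    exact (mem_subgroupOf.mp this).2

theorem SN.of_subgroupOf_top {d : ℕ} {K : Subgroup G} (h : SN d (K.subgroupOf (⊤ : Subgroup G))) :
    SN d K := by
  have h2 := h.map (Subgroup.topEquiv (G := G)).toMonoidHom (fun y => ⟨⟨y, trivial⟩, rfl⟩)
  have h3 : Subgroup.map Subgroup.topEquiv.toMonoidHom (K.subgroupOf ⊤) = K := by
    ext y
    simp only [Subgroup.mem_map]
    constructor
    · rintro ⟨x, hx, rfl⟩
      exact mem_subgroupOf.mp hx
    · intro hy
      exact ⟨⟨y, trivial⟩, mem_subgroupOf.mpr hy, rfl⟩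
  rwa [h3] at h2

open commutatorElement in
theorem lemC (c : ℕ) : ∀ (G : Type u) [Group G] [Finite G] (d : ℕ) (K N : Subgroup G),
    Nat.card G ≤ c → SN d K → IsQuasisimple ↥K → N.Normal →
    K ≤ N ∨ N ≤ Subgroup.centralizer (K : Set G) := by
  induction c with
  | zero =>
    intro G _ _ d K N hcard _ _ _
    have := Nat.card_pos (α := G)
    omega
  | succ c ih =>
    intro G _ _ d
    induction d with
    | zero =>
      intro K N _ hSN hq hN
      obtain rfl : K = ⊤ := hSN
      rcases dichotomy hq hN with h | h
      · exact Or.inl h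
      · right
        rwa [top_inf_eq] at h
    | succ d ihd =>
      intro K N hcard hSN hq hN
      obtain ⟨M, hMnorm, hKM, hSN'⟩ := SN_rev hSN
      by_cases hMtop : M = ⊤
      · subst hMtop
        exact ihd K N hcard hSN'.of_subgroupOf_top hq hN
      · have hcardM : Nat.card ↥M ≤ c := by
          have := card_lt_of_ne_top hMtop
          omega
        set K' := K.subgroupOf M with hK'
        set N'' := (N ⊓ M).subgroupOf M with hN''def
        have hq' : IsQuasisimple ↥K' := isQuasisimple_mulEquiv (subgroupOfEquivOfLe hKM).symm hq
        have hN'' : N''.Normal := by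
          constructor
          intro a ha g
          rw [hN''def, mem_subgroupOf] at ha ⊢
          refine ⟨?_, (g * a * g⁻¹).2⟩
          have := hN.conj_mem _ ha.1 ↑g
          simpa using this
        rcases ih ↥M d K' N'' hcardM hSN' hq' hN'' with h | h
        · left
          intro k hk
          have : (⟨k, hKM hk⟩ : ↥M) ∈ K' := mem_subgroupOf.mpr hk
          exact (mem_subgroupOf.mp (h this)).1
        · have hcent : N ⊓ M ≤ Subgroup.centralizer (K : Set G) := by
            intro x hx
            rw [Subgroup.mem_centralizer_iff]
            intro k hk
            have hx' : (⟨x, hx.2⟩ : ↥M) ∈ N'' := mem_subgroupOf.mpr hx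
            have hk' : (⟨k, hKM hk⟩ : ↥M) ∈ (K' : Set ↥M) := mem_subgroupOf.mpr hk
            have := Subgroup.mem_centralizer_iff.mp (h hx') _ hk'
            exact congrArg Subtype.val this
          have hKN : ⁅K, N⁆ ≤ N ⊓ M := by
            rw [Subgroup.commutator_le]
            intro k hk n hn
            constructor
            · show k * n * k⁻¹ * n⁻¹ ∈ N
              exact mul_mem (hN.conj_mem n hn k) (inv_mem hn)
            · show k * n * k⁻¹ * n⁻¹ ∈ M
              have heq : k * n * k⁻¹ * n⁻¹ = k * (n * k⁻¹ * n⁻¹) := by group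
              rw [heq]
              exact mul_mem (hKM hk) (hMnorm.conj_mem _ (inv_mem (hKM hk)) n)
          have hNK : ⁅N, K⁆ ≤ N ⊓ M := by
            rw [Subgroup.commutator_le]
            intro n hn k hk
            constructor
            · show n * k * n⁻¹ * k⁻¹ ∈ N
              have heq : n * k * n⁻¹ * k⁻¹ = n * (k * n⁻¹ * k⁻¹) := by group
              rw [heq]
              exact mul_mem hn (hN.conj_mem _ (inv_mem hn) k)
            · show n * k * n⁻¹ * k⁻¹ ∈ M
              exact mul_mem (hMnorm.conj_mem _ (hKM hk) n) (inv_mem (hKM hk))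
          have h1 : ⁅⁅K, N⁆, K⁆ = ⊥ :=
            Subgroup.commutator_eq_bot_iff_le_centralizer.mpr (hKN.trans hcent)
          have h2 : ⁅⁅N, K⁆, K⁆ = ⊥ :=
            Subgroup.commutator_eq_bot_iff_le_centralizer.mpr (hNK.trans hcent)
          have h3 := Subgroup.commutator_commutator_eq_bot_of_rotate h1 h2
          rw [perfect_top_iff.mp hq.1] at h3
          right
          intro n hn
          rw [Subgroup.mem_centralizer_iff]
          intro k hk
          have : ⁅k, n⁆ ∈ (⊥ : Subgroup G) := h3 ▸ Subgroup.commutator_mem_commutator hk hn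
          rw [Subgroup.mem_bot, commutatorElement_eq_one_iff_mul_comm] at this
          exact this

theorem perfect_subgroupOf {K M : Subgroup G} (h : ⁅K, K⁆ = K) (hKM : K ≤ M) :
    ⁅K.subgroupOf M, K.subgroupOf M⁆ = K.subgroupOf M := by
  apply Subgroup.map_injective M.subtype_injective
  rw [Subgroup.map_commutator, subgroupOf_map_subtype, inf_of_le_left hKM, h]

theorem isSolvable_subgroupOf {A M : Subgroup G} (hA : A ≤ M) (h : IsSolvable ↥A) :
    IsSolvable ↥(A.subgroupOf M) := by
  haveI : Group.IsSolvable ↥A := h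
  exact solvable_of_solvable_injective (f := (subgroupOfEquivOfLe hA).toMonoidHom)
    (subgroupOfEquivOfLe hA).injective

theorem lemC' {G : Type u} [Group G] [Finite G] (K : Subgroup G)
    (hq : IsQuasisimple ↥K) (hKsn : ∃ d, SN d K) (n : ℕ) :
    ∀ N : Subgroup G, SN n N → K ≤ N ∨ N ≤ Subgroup.centralizer (K : Set G) := by
  induction n with
  | zero =>
    intro N hN
    left
    rw [show N = ⊤ from hN]
    exact le_top
  | succ n ihn =>
    intro N hN
    obtain ⟨M, hNM, hnorm, hSNM⟩ := hN
    rcases ihn M hSNM with h | h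
    · obtain ⟨d, hd⟩ := hKsn
      have hq' : IsQuasisimple ↥(K.subgroupOf M) :=
        isQuasisimple_mulEquiv (subgroupOfEquivOfLe h).symm hq
      have hN' : (N.subgroupOf M).Normal := by
        constructor
        intro a ha g
        rw [mem_subgroupOf] at ha ⊢
        simpa using hnorm ↑g g.2 ↑a ha
      rcases lemC (Nat.card ↥M) ↥M d (K.subgroupOf M) (N.subgroupOf M) le_rfl
          (hd.subgroupOf h) hq' hN' with h2 | h2
      · left
        intro k hk
        have hk' : (⟨k, h hk⟩ : ↥M) ∈ K.subgroupOf M := mem_subgroupOf.mpr hk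
        exact mem_subgroupOf.mp (h2 hk')
      · right
        intro x hx
        rw [Subgroup.mem_centralizer_iff]
        intro k hk
        have hx' : (⟨x, hNM hx⟩ : ↥M) ∈ N.subgroupOf M := mem_subgroupOf.mpr hx
        have hk' : (⟨k, h hk⟩ : ↥M) ∈ ((K.subgroupOf M : Subgroup ↥M) : Set ↥M) :=
          mem_subgroupOf.mpr hk
        exact congrArg Subtype.val (Subgroup.mem_centralizer_iff.mp (h2 hx') _ hk')
    · right
      exact hNM.trans h

theorem claimB {G : Type u} [Group G] {K S : Subgroup G} (hperf : ⁅K, K⁆ = K)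
    (hS : S.Normal) (hSol : IsSolvable ↥S) (n : ℕ) :
    ∀ N : Subgroup G, SN n N → K ≤ N ⊔ S → K ≤ N := by
  induction n with
  | zero =>
    intro N hN _
    rw [show N = ⊤ from hN]
    exact le_top
  | succ n ih =>
    intro N hN hle
    obtain ⟨M, hNM, hnorm, hSNM⟩ := hN
    have hKM : K ≤ M := ih M hSNM (hle.trans (sup_le_sup_right hNM S))
    have hle2 : K ≤ N ⊔ (S ⊓ M) := by
      intro k hk
      have hk2 : k ∈ (N : Set G) * (S : Set G) := by
        rw [← Subgroup.mul_normal]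
        exact hle hk
      obtain ⟨x, hx, y, hy, rfl⟩ := hk2
      have hyM : y ∈ M := by
        have h1 : x ∈ M := hNM hx
        have h2 : x * y ∈ M := hKM hk
        simpa [mul_assoc] using mul_mem (inv_mem h1) h2
      exact mul_mem (Subgroup.mem_sup_left hx) (Subgroup.mem_sup_right ⟨hy, hyM⟩)
    have hN' : (N.subgroupOf M).Normal := by
      constructor
      intro a ha g
      rw [mem_subgroupOf] at ha ⊢
      simpa using hnorm ↑g g.2 ↑a ha
    have hperf' := perfect_subgroupOf hperf hKM
    have hsolv' : IsSolvable ↥((S ⊓ M).subgroupOf M) :=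
      isSolvable_subgroupOf inf_le_right (isSolvable_of_le inf_le_left hSol)
    have hle3 : K.subgroupOf M ≤ N.subgroupOf M ⊔ (S ⊓ M).subgroupOf M := by
      rw [← sup_subgroupOf hNM inf_le_right]
      intro x hx
      exact mem_subgroupOf.mpr (hle2 (mem_subgroupOf.mp hx))
    have hfin := perfect_le_of_le_sup hN' hperf' hsolv' hle3
    intro k hk
    have hk' : (⟨k, hKM hk⟩ : ↥M) ∈ K.subgroupOf M := mem_subgroupOf.mpr hk
    exact mem_subgroupOf.mp (hfin hk')

theorem lemU (n : ℕ) : ∀ (G : Type u) [Group G] [Finite G] (K S : Subgroup G),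
    SN n K → ⁅K, K⁆ = K → S.Normal → IsSolvable ↥S → K ⊔ S = ⊤ → K.Normal := by
  induction n with
  | zero =>
    intro G _ _ K S hSN _ _ _ _
    obtain rfl : K = ⊤ := hSN
    infer_instance
  | succ n ih =>
    intro G _ _ K S hSN hperf hS hSsolv htop
    obtain ⟨M, hMnorm, hKM, hSN'⟩ := SN_rev hSN
    have hMeq : K ⊔ (S ⊓ M) = M := by
      apply le_antisymm (sup_le hKM inf_le_right)
      intro m hm
      have hm2 : m ∈ (K : Set G) * (S : Set G) := by
        rw [← Subgroup.mul_normal, htop]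
        trivial
      obtain ⟨x, hx, y, hy, rfl⟩ := hm2
      have hyM : y ∈ M := by
        simpa [mul_assoc] using mul_mem (inv_mem (hKM hx)) hm
      exact mul_mem (Subgroup.mem_sup_left hx) (Subgroup.mem_sup_right ⟨hy, hyM⟩)
    have hperf' := perfect_subgroupOf hperf hKM
    have hT'norm : ((S ⊓ M).subgroupOf M).Normal := by
      constructor
      intro a ha g
      rw [mem_subgroupOf] at ha ⊢
      refine ⟨?_, (g * a * g⁻¹).2⟩
      simpa using hS.conj_mem _ ha.1 ↑g
    have hT'solv : IsSolvable ↥((S ⊓ M).subgroupOf M) :=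
      isSolvable_subgroupOf inf_le_right (isSolvable_of_le inf_le_left hSsolv)
    have htop' : K.subgroupOf M ⊔ (S ⊓ M).subgroupOf M = ⊤ := by
      rw [← sup_subgroupOf hKM inf_le_right, hMeq, subgroupOf_self]
    have hKnormM : (K.subgroupOf M).Normal :=
      ih ↥M (K.subgroupOf M) ((S ⊓ M).subgroupOf M) hSN' hperf' hT'norm hT'solv htop'
    have key : ∀ s ∈ S, ∀ k ∈ K, s * k * s⁻¹ ∈ K := by
      intro s hs
      set f := (MulAut.conj s).toMonoidHom with hf
      have hfk : ∀ k : G, f k = s * k * s⁻¹ := fun k => rfl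
      have hKsM : K.map f ≤ M := by
        rintro _ ⟨k, hk, rfl⟩
        rw [hfk]
        exact hMnorm.conj_mem _ (hKM hk) s
      have hperfKs : ⁅K.map f, K.map f⁆ = K.map f := by
        rw [← Subgroup.map_commutator, hperf]
      have hsub : (K.map f).subgroupOf M ≤ K.subgroupOf M ⊔ (S ⊓ M).subgroupOf M := by
        rw [htop']
        exact le_top
      have hle := perfect_le_of_le_sup hKnormM (perfect_subgroupOf hperfKs hKsM) hT'solv hsub
      have hKsK : K.map f ≤ K := by
        intro x hx
        have hx' : (⟨x, hKsM hx⟩ : ↥M) ∈ (K.map f).subgroupOf M := mem_subgroupOf.mpr hx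
        exact mem_subgroupOf.mp (hle hx')
      have hcardeq : Nat.card ↥(K.map f) = Nat.card ↥K :=
        (Nat.card_congr (K.equivMapOfInjective f (MulAut.conj s).injective).toEquiv).symm
      have hKs : K.map f = K := eq_of_le_of_card_le' hKsK hcardeq.ge
      intro k hk
      rw [← hKs]
      exact ⟨k, hk, rfl⟩
    rw [← Subgroup.normalizer_eq_top_iff, eq_top_iff, ← htop]
    apply sup_le le_normalizer
    intro s hs
    rw [Subgroup.mem_normalizer_iff]
    intro h
    constructor
    · exact fun hh => key s hs h hh
    · intro hh
      have h2 := key s⁻¹ (inv_mem hs) _ hh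
      have h3 : s⁻¹ * (s * h * s⁻¹) * s⁻¹⁻¹ = h := by group
      rwa [h3] at h2

theorem lemW {G : Type u} [Group G] [Finite G] {K₁ K₂ S : Subgroup G}
    (h1p : ⁅K₁, K₁⁆ = K₁) (h2p : ⁅K₂, K₂⁆ = K₂) (hS : S.Normal) (hSsolv : IsSolvable ↥S)
    (hsn1 : ∃ n, SN n K₁) (hsn2 : ∃ n, SN n K₂)
    (ht1 : K₁ ⊔ S = ⊤) (ht2 : K₂ ⊔ S = ⊤) : K₁ = K₂ := by
  obtain ⟨n1, h1⟩ := hsn1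
  obtain ⟨n2, h2⟩ := hsn2
  have hN1 : K₁.Normal := lemU n1 G K₁ S h1 h1p hS hSsolv ht1
  have hN2 : K₂.Normal := lemU n2 G K₂ S h2 h2p hS hSsolv ht2
  have h12 : K₂ ≤ K₁ := perfect_le_of_le_sup hN1 h2p hSsolv (ht1 ▸ le_top)
  have h21 : K₁ ≤ K₂ := perfect_le_of_le_sup hN2 h1p hSsolv (ht2 ▸ le_top)
  exact le_antisymm h21 h12

/-- If `K` is a sol-component of a finite group `G` and `N` is a subnormal subgroup
of `G`, then `K ≤ N` or `N ≤ N_G(K)`. -/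
theorem solComponent_le_or_le_normalizer
    {G : Type*} [Group G] [Finite G] {K N : Subgroup G}
    (hK : K.IsSolComponent) (hN : N.IsSubnormalIn) :
    K ≤ N ∨ N ≤ Subgroup.normalizer (K : Set G) := by
  obtain ⟨hperf, hKsub, hcomp⟩ := hK
  have hSnorm : (sol G).Normal := inferInstance
  have hSsolv : IsSolvable ↥(sol G) := isSolvable_sol G
  set f := QuotientGroup.mk' (sol G) with hf
  obtain ⟨nN, hSNN⟩ := exists_SN_of_isSubnormalIn hN
  have hNbar : SN nN (N.map f) := hSNN.map f (QuotientGroup.mk'_surjective (sol G))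
  obtain ⟨dK, hSNKbar⟩ := exists_SN_of_isSubnormalIn hcomp.1
  have hqbar : IsQuasisimple ↥(K.map f) := hcomp.2
  rcases lemC' (K.map f) hqbar ⟨dK, hSNKbar⟩ nN (N.map f) hNbar with h | h
  · left
    have hle : K ≤ N ⊔ sol G := by
      intro k hk
      have hfk : f k ∈ N.map f := h ⟨k, hk, rfl⟩
      obtain ⟨m, hm, hfm⟩ := hfk
      have hmem : m⁻¹ * k ∈ sol G := by
        have : f (m⁻¹ * k) = 1 := by
          rw [map_mul, map_inv, hfm, inv_mul_cancel]
        rwa [← QuotientGroup.ker_mk' (sol G), MonoidHom.mem_ker]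
      have hkeq : k = m * (m⁻¹ * k) := by group
      rw [hkeq]
      exact mul_mem (Subgroup.mem_sup_left hm) (Subgroup.mem_sup_right hmem)
    exact claimB hperf hSnorm hSsolv nN N hSNN hle
  · right
    intro n hn
    have hnbar : f n ∈ Subgroup.centralizer ((K.map f : Subgroup (G ⧸ sol G)) : Set (G ⧸ sol G)) :=
      h ⟨n, hn, rfl⟩
    set cf := (MulAut.conj n).toMonoidHom with hcf
    have hfkc : ∀ k : G, cf k = n * k * n⁻¹ := fun _ => rfl
    have hcfsurj : Function.Surjective cf := fun y => ⟨n⁻¹ * y * n, by rw [hfkc]; group⟩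
    have hmapeq : (K.map cf).map f = K.map f := by
      ext y
      simp only [Subgroup.mem_map]
      constructor
      · rintro ⟨_, ⟨k, hk, rfl⟩, rfl⟩
        refine ⟨k, hk, ?_⟩
        have hcomm := Subgroup.mem_centralizer_iff.mp hnbar (f k) ⟨k, hk, rfl⟩
        rw [hfkc, map_mul, map_mul, map_inv, ← hcomm, mul_inv_cancel_right]
      · rintro ⟨k, hk, rfl⟩
        refine ⟨cf k, ⟨k, hk, rfl⟩, ?_⟩
        have hcomm := Subgroup.mem_centralizer_iff.mp hnbar (f k) ⟨k, hk, rfl⟩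
        rw [hfkc, map_mul, map_mul, map_inv, ← hcomm, mul_inv_cancel_right]
    have hsup : K.map cf ⊔ sol G = K ⊔ sol G := by
      have e1 := congrArg (Subgroup.comap f) hmapeq
      rwa [Subgroup.comap_map_eq, Subgroup.comap_map_eq, QuotientGroup.ker_mk'] at e1
    set Hs := K ⊔ sol G with hHs
    have hK1 : K ≤ Hs := le_sup_left
    have hK2 : K.map cf ≤ Hs := by rw [← hsup]; exact le_sup_left
    have hSle : sol G ≤ Hs := le_sup_right
    have hS'norm : ((sol G).subgroupOf Hs).Normal := by
      constructor
      intro a ha g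
      rw [mem_subgroupOf] at ha ⊢
      simpa using hSnorm.conj_mem _ ha ↑g
    have hS'solv := isSolvable_subgroupOf hSle hSsolv
    have ht1 : K.subgroupOf Hs ⊔ (sol G).subgroupOf Hs = ⊤ := by
      rw [← sup_subgroupOf hK1 hSle, ← hHs, subgroupOf_self]
    have ht2 : (K.map cf).subgroupOf Hs ⊔ (sol G).subgroupOf Hs = ⊤ := by
      rw [← sup_subgroupOf hK2 hSle, hsup, subgroupOf_self]
    obtain ⟨nK, hSNK⟩ := exists_SN_of_isSubnormalIn hKsub
    have hsn1 : ∃ m, SN m (K.subgroupOf Hs) := ⟨nK, hSNK.subgroupOf hK1⟩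
    have hsn2 : ∃ m, SN m ((K.map cf).subgroupOf Hs) :=
      ⟨nK, (hSNK.map cf hcfsurj).subgroupOf hK2⟩
    have hperf2 : ⁅K.map cf, K.map cf⁆ = K.map cf := by
      rw [← Subgroup.map_commutator, hperf]
    have heq' := lemW (perfect_subgroupOf hperf hK1) (perfect_subgroupOf hperf2 hK2)
      hS'norm hS'solv hsn1 hsn2 ht1 ht2
    have hKeq : K = K.map cf := by
      have e2 := congrArg (Subgroup.map Hs.subtype) heq'
      rwa [subgroupOf_map_subtype, subgroupOf_map_subtype, inf_of_le_left hK1,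
        inf_of_le_left hK2] at e2
    rw [Subgroup.mem_normalizer_iff]
    intro x
    constructor
    · intro hx
      have hcx : cf x ∈ K.map cf := ⟨x, hx, rfl⟩
      rw [← hKeq] at hcx
      rwa [hfkc] at hcx
    · intro hx
      rw [hKeq] at hx
      obtain ⟨k, hk, hkeq⟩ := hx
      rw [hfkc] at hkeq
      have : k = x := mul_left_cancel (mul_right_cancel hkeq)
      rwa [← this]
end

section
/- Let G be a finite group and let K and L be distinct sol-components of G. Then K and L normalize each other and [K, L] ≤ sol(G), i.e., K and L commute modulo sol(G). -/
open scoped commutatorElement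

namespace SolAux
open Subgroup Function

variable {G : Type*} [Group G]

/-- `SN K H` : there is an ascending chain from `K` to `H`, each normal in the next. -/
inductive SN : Subgroup G → Subgroup G → Prop
  | refl (H : Subgroup G) : SN H H
  | step {K M H : Subgroup G} (hKM : K ≤ M)
      (hn : ∀ g ∈ M, ∀ x ∈ K, g * x * g⁻¹ ∈ K) (h : SN M H) : SN K H

theorem SN.le {K H : Subgroup G} (h : SN K H) : K ≤ H := by
  induction h with
  | refl => exact le_rfl
  | step hKM hn h ih => exact hKM.trans ih

theorem SN.inf {K H : Subgroup G} (X : Subgroup G) (h : SN K H) : SN (K ⊓ X) (H ⊓ X) := by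
  induction h with
  | refl H => exact SN.refl _
  | step hKM hn h ih =>
      refine SN.step (inf_le_inf_right _ hKM) ?_ ih
      intro g hg x hx
      rw [Subgroup.mem_inf] at hg hx ⊢
      exact ⟨hn g hg.1 x hx.1, mul_mem (mul_mem hg.2 hx.2) (inv_mem hg.2)⟩

theorem SN.of_le {K X : Subgroup G} (h : SN K ⊤) (hKX : K ≤ X) : SN K X := by
  have := h.inf X
  rwa [inf_of_le_left hKX, top_inf_eq] at this

theorem SN.subgroupOf' {X : Subgroup G} {K M : Subgroup G} (h : SN K M) (hMX : M ≤ X) :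
    SN (K.subgroupOf X) (M.subgroupOf X) := by
  induction h with
  | refl H => exact SN.refl _
  | @step K M' H hKM hn h ih =>
      refine SN.step (fun x hx => ?_) ?_ (ih hMX)
      · rw [Subgroup.mem_subgroupOf] at hx ⊢; exact hKM hx
      · intro g hg x hx
        rw [Subgroup.mem_subgroupOf] at hg hx ⊢
        simpa using hn _ hg _ hx

theorem SN.subgroupOf {K X : Subgroup G} (h : SN K X) : SN (K.subgroupOf X) (⊤ : Subgroup X) := by
  simpa [Subgroup.subgroupOf_self] using h.subgroupOf' le_rfl

theorem SN.map_equiv {G' : Type*} [Group G'] (e : G ≃* G') {K H : Subgroup G} (h : SN K H) :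
    SN (K.map e.toMonoidHom) (H.map e.toMonoidHom) := by
  induction h with
  | refl H => exact SN.refl _
  | step hKM hn h ih =>
      refine SN.step (Subgroup.map_mono hKM) ?_ ih
      rintro g ⟨g₀, hg₀, rfl⟩ x ⟨x₀, hx₀, rfl⟩
      exact ⟨g₀ * x₀ * g₀⁻¹, hn _ hg₀ _ hx₀, by simp⟩

theorem SN.map_surjective {G' : Type*} [Group G'] (f : G →* G') (hf : Surjective f)
    {K : Subgroup G} (h : SN K ⊤) : SN (K.map f) (⊤ : Subgroup G') := by
  suffices H : ∀ {K M : Subgroup G}, SN K M → SN (K.map f) (M.map f) by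
    simpa [Subgroup.map_top_of_surjective f hf] using H h
  intro K M h
  induction h with
  | refl H => exact SN.refl _
  | step hKM hn h ih =>
      refine SN.step (Subgroup.map_mono hKM) ?_ ih
      rintro g ⟨g₀, hg₀, rfl⟩ x ⟨x₀, hx₀, rfl⟩
      exact ⟨g₀ * x₀ * g₀⁻¹, hn _ hg₀ _ hx₀, by simp⟩

theorem SN.exists_normal' {K H : Subgroup G} (h : SN K H) (hK : K ≠ H) :
    ∃ M : Subgroup G, K ≤ M ∧ M ≠ H ∧ (∀ g ∈ H, ∀ x ∈ M, g * x * g⁻¹ ∈ M) ∧ SN K M := by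
  induction h with
  | refl => exact absurd rfl hK
  | @step K M H hKM hn h ih =>
      by_cases hM : M = H
      · subst hM
        exact ⟨K, le_rfl, hK, hn, SN.refl K⟩
      · obtain ⟨M', hMM', hM', hnorm, hsn⟩ := ih hM
        exact ⟨M', hKM.trans hMM', hM', hnorm, SN.step hKM hn hsn⟩

theorem SN.exists_normal {K : Subgroup G} (h : SN K ⊤) (hK : K ≠ ⊤) :
    ∃ M : Subgroup G, K ≤ M ∧ M ≠ ⊤ ∧ M.Normal ∧ SN K M := by
  obtain ⟨M, h1, h2, h3, h4⟩ := h.exists_normal' hK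
  exact ⟨M, h1, h2, ⟨fun x hx g => h3 g trivial x hx⟩, h4⟩

end SolAux
-- conversion
namespace SolAux
open Subgroup Function
variable {G : Type*} [Group G]

theorem isSubnormalIn_SN {K : Subgroup G} (h : K.IsSubnormalIn) : SN K ⊤ := by
  obtain ⟨n, c, hc0, hlast, hstep⟩ := h
  suffices H : ∀ k : ℕ, ∀ i : Fin (n + 1), (i : ℕ) + k = n → SN (c i) ⊤ by
    subst hc0; exact H n 0 (by simp)
  intro k
  induction k with
  | zero =>
      intro i hi
      have : i = Fin.last n := by ext; simpa using hi
      rw [this, hlast]; exact SN.refl ⊤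
  | succ k ih =>
      intro i hi
      have hilt : (i : ℕ) < n := by omega
      set j : Fin n := ⟨(i : ℕ), hilt⟩ with hj
      have hic : j.castSucc = i := by ext; simp [hj]
      obtain ⟨hle, hnorm⟩ := hstep j
      have hnext : SN (c j.succ) ⊤ := ih j.succ (by simp [hj, Fin.val_succ]; omega)
      rw [← hic]
      refine SN.step hle ?_ hnext
      intro g hg x hx
      have hx' : (⟨x, hle hx⟩ : c j.succ) ∈ (c j.castSucc).subgroupOf (c j.succ) := by
        rwa [Subgroup.mem_subgroupOf]
      have := hnorm.conj_mem _ hx' ⟨g, hg⟩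
      rw [Subgroup.mem_subgroupOf] at this
      simpa using this
end SolAux
namespace SolAux
open Subgroup Function

theorem map_center_mulEquiv {A B : Type*} [Group A] [Group B] (e : A ≃* B) :
    (Subgroup.center A).map e.toMonoidHom = Subgroup.center B := by
  ext b
  simp only [Subgroup.mem_map, Subgroup.mem_center_iff]
  constructor
  · rintro ⟨a, ha, rfl⟩ g
    have := ha (e.symm g)
    calc g * e a = e (e.symm g * a) := by simp
    _ = e (a * e.symm g) := by rw [this]
    _ = e a * g := by simp
  · intro hb
    refine ⟨e.symm b, fun g => e.injective ?_, by simp⟩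
    calc e (g * e.symm b) = e g * b := by simp
    _ = b * e g := hb (e g)
    _ = e (e.symm b * g) := by simp

theorem IsQuasisimple.of_mulEquiv {A B : Type*} [Group A] [Group B] (e : A ≃* B)
    (h : IsQuasisimple A) : IsQuasisimple B := by
  obtain ⟨hperf, hsimple⟩ := h
  have htop : (⊤ : Subgroup A).map e.toMonoidHom = ⊤ :=
    Subgroup.map_top_of_surjective _ e.surjective
  constructor
  · have h2 := congrArg (Subgroup.map e.toMonoidHom) hperf
    rwa [Subgroup.map_commutator, htop] at h2
  · have e' : (A ⧸ Subgroup.center A) ≃* (B ⧸ Subgroup.center B) :=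
      QuotientGroup.congr _ _ e (map_center_mulEquiv e)
    haveI : Nontrivial (B ⧸ Subgroup.center B) := e'.toEquiv.symm.nontrivial
    exact IsSimpleGroup.isSimpleGroup_of_surjective e'.toMonoidHom e'.surjective

theorem IsQuasisimple.nontrivial {Q : Type*} [Group Q] (h : IsQuasisimple Q) : Nontrivial Q := by
  by_contra hc
  rw [not_nontrivial_iff_subsingleton] at hc
  haveI : Subsingleton (Q ⧸ Subgroup.center Q) :=
    ⟨fun a b => by
      induction a using QuotientGroup.induction_on
      induction b using QuotientGroup.induction_on
      exact congrArg _ (Subsingleton.elim _ _)⟩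
  haveI := h.2.toNontrivial
  exact not_subsingleton _ ‹Subsingleton (Q ⧸ Subgroup.center Q)›

theorem IsQuasisimple.normal_le_center {Q : Type*} [Group Q] (h : IsQuasisimple Q)
    (M : Subgroup Q) (hM : M.Normal) (hne : M ≠ ⊤) : M ≤ Subgroup.center Q := by
  obtain ⟨hperf, hsimple⟩ := h
  set Z := Subgroup.center Q with hZ
  have hmapn : (M.map (QuotientGroup.mk' Z)).Normal :=
    hM.map _ (QuotientGroup.mk'_surjective Z)
  rcases hmapn.eq_bot_or_eq_top with hbot | htop
  · intro x hx
    have hmem : QuotientGroup.mk' Z x ∈ M.map (QuotientGroup.mk' Z) := ⟨x, hx, rfl⟩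
    rw [hbot, Subgroup.mem_bot] at hmem
    have : x ∈ (QuotientGroup.mk' Z).ker := hmem
    rwa [QuotientGroup.ker_mk'] at this
  · exfalso
    have hsup : M ⊔ Z = ⊤ := by
      have := congrArg (Subgroup.comap (QuotientGroup.mk' Z)) htop
      rwa [Subgroup.comap_map_eq, QuotientGroup.ker_mk', Subgroup.comap_top] at this
    set φ := QuotientGroup.mk' M with hφ
    have hrep : ∀ a : Q ⧸ M, ∃ z ∈ Z, φ z = a := by
      intro a
      obtain ⟨g, rfl⟩ := QuotientGroup.mk'_surjective M a
      have hg : g ∈ M ⊔ Z := hsup ▸ Subgroup.mem_top g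
      have hg' : g ∈ (↑(M ⊔ Z) : Set Q) := hg
      rw [Subgroup.mul_normal M Z, Set.mem_mul] at hg'
      obtain ⟨m, hm, z, hz, rfl⟩ := hg'
      refine ⟨z, hz, ?_⟩
      have : φ m = 1 := (QuotientGroup.eq_one_iff m).mpr hm
      rw [map_mul, this, one_mul]
    have hcomm : ∀ g h' : Q, ⁅g, h'⁆ ∈ M := by
      intro g h'
      obtain ⟨z, hz, hzg⟩ := hrep (φ g)
      obtain ⟨z', hz', hzh⟩ := hrep (φ h')
      have h1 : φ ⁅g, h'⁆ = 1 := by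
        rw [map_commutatorElement, ← hzg, ← hzh, ← map_commutatorElement]
        have h2 : ⁅z, z'⁆ = 1 :=
          commutatorElement_eq_one_iff_commute.mpr (Subgroup.mem_center_iff.mp hz z').symm
        rw [h2, map_one]
      exact (QuotientGroup.eq_one_iff _).mp h1
    have hle : (⊤ : Subgroup Q) ≤ M := by
      rw [← hperf, Subgroup.commutator_le]
      exact fun g _ h' _ => hcomm g h'
    exact hne (le_antisymm le_top hle)

theorem IsQuasisimple.sn_perfect_eq_top {Q : Type*} [Group Q] (h : IsQuasisimple Q)
    {N : Subgroup Q} (hsn : SN N ⊤) (hperf : ⁅N, N⁆ = N) (hbot : N ≠ ⊥) : N = ⊤ := by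
  by_contra hne
  obtain ⟨M, hNM, hMne, hMnorm, -⟩ := hsn.exists_normal hne
  have hcent : M ≤ Subgroup.center Q := IsQuasisimple.normal_le_center h M hMnorm hMne
  have hb2 : ⁅N, N⁆ = ⊥ := by
    rw [eq_bot_iff, Subgroup.commutator_le]
    intro g hg h' hh'
    rw [Subgroup.mem_bot, commutatorElement_eq_one_iff_commute]
    exact (Subgroup.mem_center_iff.mp (hcent (hNM hg)) h').symm
  exact hbot (by rw [← hperf, hb2])

end SolAux
namespace SolAux
open Subgroup Function

variable {G : Type*} [Group G]

theorem map_subtype_eq {X : Subgroup G} {A : Subgroup G} (hA : A ≤ X) :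
    (A.subgroupOf X).map X.subtype = A := by
  rw [Subgroup.subgroupOf_map_subtype, inf_of_le_left hA]

theorem map_subtype_top (X : Subgroup G) : (⊤ : Subgroup X).map X.subtype = X := by
  rw [← Subgroup.subgroupOf_self X, Subgroup.subgroupOf_map_subtype, inf_idem]

theorem subgroupOf_commutator_bot {X A B : Subgroup G} (hA : A ≤ X) (hB : B ≤ X)
    (h : ⁅A.subgroupOf X, B.subgroupOf X⁆ = ⊥) : ⁅A, B⁆ = ⊥ := by
  have h2 := congrArg (Subgroup.map X.subtype) h
  rwa [Subgroup.map_commutator, map_subtype_eq hA, map_subtype_eq hB, Subgroup.map_bot] at h2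

theorem perfect_of_quasisimple {K : Subgroup G} (h : IsQuasisimple K) : ⁅K, K⁆ = K := by
  have h2 := congrArg (Subgroup.map K.subtype) h.1
  rwa [Subgroup.map_commutator, map_subtype_top] at h2

theorem subgroupOf_perfect {X K : Subgroup G} (hK : K ≤ X) (h : ⁅K, K⁆ = K) :
    ⁅K.subgroupOf X, K.subgroupOf X⁆ = K.subgroupOf X := by
  apply Subgroup.map_injective X.subtype_injective
  rw [Subgroup.map_commutator, map_subtype_eq hK, h]

theorem subgroupOf_quasisimple {X K : Subgroup G} (hK : K ≤ X) (h : IsQuasisimple K) :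
    IsQuasisimple (K.subgroupOf X) :=
  IsQuasisimple.of_mulEquiv (Subgroup.subgroupOfEquivOfLe hK).symm h

theorem subgroupOf_ne_bot {X K : Subgroup G} (hK : K ≤ X) (h : K ≠ ⊥) :
    K.subgroupOf X ≠ ⊥ := by
  intro hc
  apply h
  have := congrArg (Subgroup.map X.subtype) hc
  rwa [map_subtype_eq hK, Subgroup.map_bot] at this

theorem eq_of_subgroupOf_eq {X K L : Subgroup G} (hK : K ≤ X) (hL : L ≤ X)
    (h : K.subgroupOf X = L.subgroupOf X) : K = L := by
  have := congrArg (Subgroup.map X.subtype) h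
  rwa [map_subtype_eq hK, map_subtype_eq hL] at this

theorem subgroupOf_sup_eq_top {X K L : Subgroup G} (hK : K ≤ X) (hL : L ≤ X)
    (h : K ⊔ L = X) : K.subgroupOf X ⊔ L.subgroupOf X = ⊤ := by
  apply Subgroup.map_injective X.subtype_injective
  rw [Subgroup.map_sup, map_subtype_eq hK, map_subtype_eq hL, h, map_subtype_top]

theorem card_lt_of_ne_top {X : Type*} [Group X] [Finite X] {M : Subgroup X} (h : M ≠ ⊤) :
    Nat.card M < Nat.card X := by
  have h1 : Nat.card M = (M : Set X).ncard := Nat.card_coe_set_eq _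
  have h2 : Nat.card X = (Set.univ : Set X).ncard := by
    rw [Set.ncard_univ]
  rw [h1, h2]
  apply Set.ncard_lt_ncard _ Set.finite_univ
  constructor
  · exact Set.subset_univ _
  · intro hc
    apply h
    apply SetLike.coe_injective
    rw [Subgroup.coe_top]
    exact le_antisymm (Set.subset_univ _) hc

theorem commutator_eq_bot_of_centralizes {A B : Subgroup G}
    (h : ∀ a ∈ A, ∀ b ∈ B, a * b = b * a) : ⁅A, B⁆ = ⊥ := by
  rw [eq_bot_iff, Subgroup.commutator_le]
  intro g hg h' hh'
  rw [Subgroup.mem_bot, commutatorElement_eq_one_iff_commute]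
  exact h g hg h' hh'

end SolAux
namespace SolAux
open Subgroup Function

universe u

theorem comp_commute_normal_base {X : Type*} [Group X] {K H : Subgroup X}
    (hKq : IsQuasisimple K) (hKn : K.Normal) (hHn : H.Normal) (hKH : ¬K ≤ H) :
    ⁅K, H⁆ = ⊥ := by
  haveI := hKn; haveI := hHn
  have hKK : ⁅K, K⁆ = K := perfect_of_quasisimple hKq
  -- K ⊓ H is a proper normal subgroup of K, hence central in K
  have hKHne : (H.subgroupOf K) ≠ ⊤ := by
    intro hc
    apply hKH
    intro x hx
    have : (⟨x, hx⟩ : K) ∈ H.subgroupOf K := hc ▸ Subgroup.mem_top _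
    exact Subgroup.mem_subgroupOf.mp this
  have hcent' : H.subgroupOf K ≤ Subgroup.center K :=
    IsQuasisimple.normal_le_center hKq _ (Subgroup.normal_subgroupOf) hKHne
  have hcent : ⁅K ⊓ H, K⁆ = ⊥ := by
    apply commutator_eq_bot_of_centralizes
    intro a ha b hb
    have ha' : (⟨a, ha.1⟩ : K) ∈ H.subgroupOf K := Subgroup.mem_subgroupOf.mpr ha.2
    have := Subgroup.mem_center_iff.mp (hcent' ha') ⟨b, hb⟩
    have := congrArg (Subtype.val) this
    simpa using this.symm
  have h1 : ⁅⁅K, H⁆, K⁆ = ⊥ := by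
    rw [eq_bot_iff, ← hcent]
    exact Subgroup.commutator_mono (Subgroup.commutator_le_inf K H) le_rfl
  have h2 : ⁅⁅H, K⁆, K⁆ = ⊥ := by rwa [Subgroup.commutator_comm H K]
  have h3 := Subgroup.commutator_commutator_eq_bot_of_rotate h1 h2
  rwa [hKK] at h3

theorem comp_commute_normal :
    ∀ n : ℕ, ∀ (X : Type u) [Group X] [Finite X], Nat.card X < n →
      ∀ K H : Subgroup X, SN K ⊤ → IsQuasisimple K → H.Normal → ¬K ≤ H → ⁅K, H⁆ = ⊥ := by
  intro n
  induction n with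
  | zero => intro X _ _ hc; exact absurd hc (Nat.not_lt_zero _)
  | succ n ih =>
      intro X _ _ hcard K H hKsn hKq hHn hKH
      by_cases hKtop : K = ⊤
      · exact comp_commute_normal_base hKq (hKtop ▸ inferInstance) hHn hKH
      obtain ⟨M, hKM, hMne, hMn, hsnKM⟩ := hKsn.exists_normal hKtop
      have hHMn : (H ⊓ M).Normal := inferInstance
      -- recurse inside M
      have hrec : ⁅K, H ⊓ M⁆ = ⊥ := by
        have hHM_le : H ⊓ M ≤ M := inf_le_right
        apply subgroupOf_commutator_bot hKM hHM_le
        refine ih M (by have := card_lt_of_ne_top hMne; omega) _ _ hsnKM.subgroupOf (subgroupOf_quasisimple hKM hKq)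
          Subgroup.normal_subgroupOf ?_
        · intro hc
          apply hKH
          intro x hx
          have hx' : (⟨x, hKM hx⟩ : M) ∈ K.subgroupOf M := Subgroup.mem_subgroupOf.mpr hx
          exact (Subgroup.mem_subgroupOf.mp (hc hx')).1
      have hKHle : ⁅K, H⁆ ≤ H ⊓ M := by
        calc ⁅K, H⁆ ≤ ⁅M, H⁆ := Subgroup.commutator_mono hKM le_rfl
        _ ≤ M ⊓ H := Subgroup.commutator_le_inf M H
        _ = H ⊓ M := inf_comm M H
      have hcent : ⁅H ⊓ M, K⁆ = ⊥ := by rwa [Subgroup.commutator_comm] at hrec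
      have h1 : ⁅⁅K, H⁆, K⁆ = ⊥ := by
        rw [eq_bot_iff, ← hcent]
        exact Subgroup.commutator_mono hKHle le_rfl
      have h2 : ⁅⁅H, K⁆, K⁆ = ⊥ := by rwa [Subgroup.commutator_comm H K]
      have h3 := Subgroup.commutator_commutator_eq_bot_of_rotate h1 h2
      rwa [perfect_of_quasisimple hKq] at h3

theorem comp_commute_subnormal :
    ∀ n : ℕ, ∀ (X : Type u) [Group X] [Finite X], Nat.card X < n →
      ∀ K H : Subgroup X, SN K ⊤ → IsQuasisimple K → SN H ⊤ → ¬K ≤ H → ⁅K, H⁆ = ⊥ := by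
  intro n
  induction n with
  | zero => intro X _ _ hc; exact absurd hc (Nat.not_lt_zero _)
  | succ n ih =>
      intro X _ _ hcard K H hKsn hKq hHsn hKH
      by_cases hHtop : H = ⊤
      · exact absurd (hHtop ▸ le_top) hKH
      obtain ⟨M, hHM, hMne, hMn, hsnHM⟩ := hHsn.exists_normal hHtop
      by_cases hKM : K ≤ M
      · apply subgroupOf_commutator_bot hKM hHM
        refine ih M (by have := card_lt_of_ne_top hMne; omega) _ _
          (hKsn.of_le hKM).subgroupOf (subgroupOf_quasisimple hKM hKq) hsnHM.subgroupOf ?_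
        intro hc
        apply hKH
        intro x hx
        have hx' : (⟨x, hKM hx⟩ : M) ∈ K.subgroupOf M := Subgroup.mem_subgroupOf.mpr hx
        exact Subgroup.mem_subgroupOf.mp (hc hx')
      · have := comp_commute_normal (Nat.card X + 1) X (by omega) K M hKsn hKq hMn hKM
        rw [eq_bot_iff, ← this]
        exact Subgroup.commutator_mono le_rfl hHM

theorem distinct_comps_commute {X : Type*} [Group X] [Finite X] {K L : Subgroup X}
    (hKsn : SN K ⊤) (hKq : IsQuasisimple K) (hLsn : SN L ⊤) (hLq : IsQuasisimple L)
    (hne : K ≠ L) : ⁅K, L⁆ = ⊥ := by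
  by_cases hKL : K ≤ L
  · exfalso
    apply hne
    have hKq' : ⁅K.subgroupOf L, K.subgroupOf L⁆ = K.subgroupOf L :=
      subgroupOf_perfect hKL (perfect_of_quasisimple hKq)
    have hKbot : K ≠ ⊥ := by
      haveI := IsQuasisimple.nontrivial hKq
      exact (Subgroup.nontrivial_iff_ne_bot K).mp ‹_›
    have htop : K.subgroupOf L = ⊤ :=
      IsQuasisimple.sn_perfect_eq_top hLq (hKsn.of_le hKL).subgroupOf hKq'
        (subgroupOf_ne_bot hKL hKbot)
    apply eq_of_subgroupOf_eq hKL le_rfl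
    rw [htop, Subgroup.subgroupOf_self]
  · exact comp_commute_subnormal (Nat.card X + 1) X (by omega) K L hKsn hKq hLsn hKL

end SolAux
namespace SolAux
open Subgroup Function

universe u

variable {G : Type*} [Group G]

/-- Iterated commutator subgroup, relative version. -/
def iterDer (S : Subgroup G) : ℕ → Subgroup G
  | 0 => S
  | n + 1 => ⁅iterDer S n, iterDer S n⁆

theorem iterDer_shift (S : Subgroup G) (n : ℕ) : iterDer ⁅S, S⁆ n = iterDer S (n + 1) := by
  induction n with
  | zero => rfl
  | succ n ih => show ⁅iterDer ⁅S, S⁆ n, iterDer ⁅S, S⁆ n⁆ = _; rw [ih]; rfl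

theorem iterDer_map {G' : Type*} [Group G'] (f : G →* G') (S : Subgroup G) (n : ℕ) :
    (iterDer S n).map f = iterDer (S.map f) n := by
  induction n with
  | zero => rfl
  | succ n ih => show (⁅iterDer S n, iterDer S n⁆).map f = _; rw [Subgroup.map_commutator, ih]; rfl

theorem iterDer_subtype_derivedSeries (H : Subgroup G) (n : ℕ) :
    (derivedSeries H n).map H.subtype = iterDer H n := by
  induction n with
  | zero => exact map_subtype_top H
  | succ n ih => rw [derivedSeries_succ, Subgroup.map_commutator, ih]; rfl

theorem exists_iterDer_bot (H : Subgroup G) [Group.IsSolvable H] : ∃ n, iterDer H n = ⊥ := by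
  obtain ⟨n, hn⟩ := (isSolvable_def _).mp ‹Group.IsSolvable H›
  exact ⟨n, by rw [← iterDer_subtype_derivedSeries, hn, Subgroup.map_bot]⟩

theorem comm_top_le_of_sup {X : Type*} [Group X] {K B : Subgroup X} (hK : K.Normal)
    (hab : ∀ a ∈ B, ∀ b ∈ B, a * b = b * a) (h : K ⊔ B = ⊤) :
    ⁅(⊤ : Subgroup X), (⊤ : Subgroup X)⁆ ≤ K := by
  haveI := hK
  rw [Subgroup.commutator_le]
  intro g _ h' _
  set φ := QuotientGroup.mk' K with hφ
  have hrep : ∀ a : X ⧸ K, ∃ z ∈ B, φ z = a := by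
    intro a
    obtain ⟨g₀, rfl⟩ := QuotientGroup.mk'_surjective K a
    have hg : g₀ ∈ (↑(K ⊔ B) : Set X) := by rw [h]; trivial
    rw [Subgroup.normal_mul K B, Set.mem_mul] at hg
    obtain ⟨m, hm, z, hz, rfl⟩ := hg
    refine ⟨z, hz, ?_⟩
    have h1 : φ m = 1 := (QuotientGroup.eq_one_iff m).mpr hm
    rw [map_mul, h1, one_mul]
  obtain ⟨z, hz, hzg⟩ := hrep (φ g)
  obtain ⟨z', hz', hzh⟩ := hrep (φ h')
  have h1 : φ ⁅g, h'⁆ = 1 := by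
    rw [map_commutatorElement, ← hzg, ← hzh, ← map_commutatorElement]
    have h2 : ⁅z, z'⁆ = 1 := commutatorElement_eq_one_iff_commute.mpr (hab z hz z' hz')
    rw [h2, map_one]
  exact (QuotientGroup.eq_one_iff _).mp h1

theorem perfect_sn_normal :
    ∀ n : ℕ, ∀ (X : Type u) [Group X] [Finite X], Nat.card X < n →
      ∀ K A : Subgroup X, A.Normal → (∀ a ∈ A, ∀ b ∈ A, a * b = b * a) →
        ⁅K, K⁆ = K → SN K ⊤ → K ⊔ A = ⊤ → K.Normal := by
  intro n
  induction n with
  | zero => intro X _ _ hc; exact absurd hc (Nat.not_lt_zero _)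
  | succ n ih =>
      intro X _ _ hcard K A hAn hab hKp hKsn hKsup
      by_cases hKtop : K = ⊤
      · rw [hKtop]; infer_instance
      obtain ⟨M, hKM, hMne, hMn, hsnKM⟩ := hKsn.exists_normal hKtop
      haveI := hMn; haveI := hAn
      have hsupM : K ⊔ (A ⊓ M) = M := by
        apply le_antisymm (sup_le hKM inf_le_right)
        intro m hm
        have h0 : m ∈ (↑(K ⊔ A) : Set X) := by rw [hKsup]; trivial
        rw [Subgroup.mul_normal K A, Set.mem_mul] at h0
        obtain ⟨k, hk, a, ha, rfl⟩ := h0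
        have ha' : a ∈ A ⊓ M := ⟨ha, by
          have hx : a = k⁻¹ * (k * a) := by group
          rw [hx]; exact M.mul_mem (M.inv_mem (hKM hk)) hm⟩
        exact mul_mem (Subgroup.mem_sup_left hk) (Subgroup.mem_sup_right ha')
      have hKMnorm : (K.subgroupOf M).Normal := by
        refine ih M (by have := card_lt_of_ne_top hMne; omega) (K.subgroupOf M)
          ((A ⊓ M).subgroupOf M) Subgroup.normal_subgroupOf ?_
          (subgroupOf_perfect hKM hKp) hsnKM.subgroupOf
          (subgroupOf_sup_eq_top hKM inf_le_right hsupM)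
        intro a ha b hb
        rw [Subgroup.mem_subgroupOf] at ha hb
        exact Subtype.ext (hab _ ha.1 _ hb.1)
      have hcomm : ⁅M, M⁆ ≤ K := by
        have h2 : ⁅(⊤ : Subgroup M), (⊤ : Subgroup M)⁆ ≤ K.subgroupOf M := by
          refine comm_top_le_of_sup hKMnorm ?_ (subgroupOf_sup_eq_top hKM inf_le_right hsupM)
          intro a ha b hb
          rw [Subgroup.mem_subgroupOf] at ha hb
          exact Subtype.ext (hab _ ha.1 _ hb.1)
        have h3 := Subgroup.map_mono (f := M.subtype) h2
        rwa [Subgroup.map_commutator, map_subtype_top, map_subtype_eq hKM] at h3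
      have hKeq : K = ⁅M, M⁆ := by
        refine le_antisymm ?_ hcomm
        conv_lhs => rw [← hKp]
        exact Subgroup.commutator_mono hKM hKM
      rw [hKeq]
      exact Subgroup.commutator_normal M M

theorem unique_perfect_sn_abelian {X : Type*} [Group X] [Finite X] {A K L : Subgroup X}
    (hAn : A.Normal) (hab : ∀ a ∈ A, ∀ b ∈ A, a * b = b * a)
    (hKp : ⁅K, K⁆ = K) (hKsn : SN K ⊤) (hKsup : K ⊔ A = ⊤)
    (hLp : ⁅L, L⁆ = L) (hLsn : SN L ⊤) (hLsup : L ⊔ A = ⊤) : K = L := by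
  have hKn : K.Normal :=
    perfect_sn_normal (Nat.card X + 1) X (by omega) K A hAn hab hKp hKsn hKsup
  have hLn : L.Normal :=
    perfect_sn_normal (Nat.card X + 1) X (by omega) L A hAn hab hLp hLsn hLsup
  have h1 : ⁅(⊤ : Subgroup X), (⊤ : Subgroup X)⁆ ≤ K := comm_top_le_of_sup hKn hab hKsup
  have h2 : ⁅(⊤ : Subgroup X), (⊤ : Subgroup X)⁆ ≤ L := comm_top_le_of_sup hLn hab hLsup
  apply le_antisymm
  · calc K = ⁅K, K⁆ := hKp.symm
      _ ≤ ⁅⊤, ⊤⁆ := Subgroup.commutator_mono le_top le_top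
      _ ≤ L := h2
  · calc L = ⁅L, L⁆ := hLp.symm
      _ ≤ ⁅⊤, ⊤⁆ := Subgroup.commutator_mono le_top le_top
      _ ≤ K := h1

theorem unique_perfect_sn_solvable :
    ∀ n : ℕ, ∀ (X : Type u) [Group X] [Finite X], ∀ S K L : Subgroup X,
      S.Normal → iterDer S n = ⊥ →
      ⁅K, K⁆ = K → SN K ⊤ → K ⊔ S = ⊤ →
      ⁅L, L⁆ = L → SN L ⊤ → L ⊔ S = ⊤ → K = L := by
  intro n
  induction n with
  | zero =>
      intro X _ _ S K L hSn hder hKp hKsn hKsup hLp hLsn hLsup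
      have hS : S = ⊥ := hder
      rw [hS, sup_bot_eq] at hKsup hLsup
      rw [hKsup, hLsup]
  | succ n ih =>
      intro X _ _ S K L hSn hder hKp hKsn hKsup hLp hLsn hLsup
      haveI := hSn
      set S' : Subgroup X := ⁅S, S⁆ with hS'
      have hS'n : S'.Normal := Subgroup.commutator_normal S S
      haveI := hS'n
      set q := QuotientGroup.mk' S' with hq
      have hqsurj : Surjective q := QuotientGroup.mk'_surjective S'
      -- the images over X ⧸ S'
      have habq : ∀ a ∈ S.map q, ∀ b ∈ S.map q, a * b = b * a := by
        rintro a ⟨a₀, ha₀, rfl⟩ b ⟨b₀, hb₀, rfl⟩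
        have h1 : ⁅a₀, b₀⁆ ∈ S' := Subgroup.commutator_mem_commutator ha₀ hb₀
        have h2 : q ⁅a₀, b₀⁆ = 1 := (QuotientGroup.eq_one_iff _).mpr h1
        rw [map_commutatorElement] at h2
        have := commutatorElement_eq_one_iff_commute.mp h2
        exact this
      have hmapeq : K.map q = L.map q := by
        refine unique_perfect_sn_abelian (hSn.map q hqsurj) habq ?_
          (hKsn.map_surjective q hqsurj) ?_ ?_ (hLsn.map_surjective q hqsurj) ?_
        · rw [← Subgroup.map_commutator, hKp]
        · rw [← Subgroup.map_sup, hKsup, Subgroup.map_top_of_surjective q hqsurj]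
        · rw [← Subgroup.map_commutator, hLp]
        · rw [← Subgroup.map_sup, hLsup, Subgroup.map_top_of_surjective q hqsurj]
      have hYeq : K ⊔ S' = L ⊔ S' := by
        have := congrArg (Subgroup.comap q) hmapeq
        rwa [Subgroup.comap_map_eq, Subgroup.comap_map_eq, QuotientGroup.ker_mk'] at this
      have hKY : K ≤ K ⊔ S' := le_sup_left
      have hS'Y : S' ≤ K ⊔ S' := le_sup_right
      have hLY : L ≤ K ⊔ S' := hYeq ▸ (le_sup_left : L ≤ L ⊔ S')
      have hiter : iterDer (S'.subgroupOf (K ⊔ S')) n = ⊥ := by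
        apply Subgroup.map_injective (K ⊔ S').subtype_injective
        rw [iterDer_map, map_subtype_eq hS'Y, Subgroup.map_bot, iterDer_shift]
        exact hder
      exact eq_of_subgroupOf_eq hKY hLY
        (ih ↥(K ⊔ S') (S'.subgroupOf (K ⊔ S')) (K.subgroupOf (K ⊔ S')) (L.subgroupOf (K ⊔ S'))
          Subgroup.normal_subgroupOf hiter
          (subgroupOf_perfect hKY hKp) ((hKsn.of_le hKY).subgroupOf)
          (subgroupOf_sup_eq_top hKY hS'Y rfl)
          (subgroupOf_perfect hLY hLp) ((hLsn.of_le hLY).subgroupOf)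
          (subgroupOf_sup_eq_top hLY hS'Y hYeq.symm))
  
end SolAux
namespace SolAux
open Subgroup Function

theorem card_mono {X : Type*} [Group X] [Finite X] {A B : Subgroup X} (h : A ≤ B) :
    Nat.card A ≤ Nat.card B := by
  have h1 : Nat.card A = (A : Set X).ncard := Nat.card_coe_set_eq _
  have h2 : Nat.card B = (B : Set X).ncard := Nat.card_coe_set_eq _
  rw [h1, h2]
  exact Set.ncard_le_ncard h (Set.toFinite _)

theorem eq_of_le_of_card_le' {X : Type*} [Group X] [Finite X] {A B : Subgroup X} (h : A ≤ B)
    (hc : Nat.card B ≤ Nat.card A) : A = B := by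
  apply SetLike.coe_injective
  have h1 : Nat.card A = (A : Set X).ncard := Nat.card_coe_set_eq _
  have h2 : Nat.card B = (B : Set X).ncard := Nat.card_coe_set_eq _
  rw [h1, h2] at hc
  exact Set.eq_of_subset_of_ncard_le h hc (Set.toFinite _)

theorem sup_normal_solvable {X : Type*} [Group X] {N M : Subgroup X} (hN : N.Normal)
    (hNs : Group.IsSolvable N) (hMs : Group.IsSolvable M) : Group.IsSolvable ↥(N ⊔ M) := by
  haveI := hN; haveI := hNs; haveI := hMs
  set f : ↥N →* ↥(N ⊔ M) := Subgroup.inclusion le_sup_left with hf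
  set g : ↥(N ⊔ M) →* (↥(N ⊔ M) ⧸ (N.subgroupOf (N ⊔ M))) := QuotientGroup.mk' _ with hg
  have hker : g.ker ≤ f.range := by
    rw [hg, QuotientGroup.ker_mk', hf, Subgroup.inclusion_range]
  haveI : Group.IsSolvable (↥(N ⊔ M) ⧸ (N.subgroupOf (N ⊔ M))) := by
    have hsurj : Surjective (g.comp (Subgroup.inclusion (le_sup_right : M ≤ N ⊔ M))) := by
      intro y
      obtain ⟨x, rfl⟩ := QuotientGroup.mk'_surjective _ y
      have hx : (x : X) ∈ (↑(N ⊔ M) : Set X) := x.2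
      rw [Subgroup.normal_mul N M, Set.mem_mul] at hx
      obtain ⟨a, ha, b, hb, hab⟩ := hx
      refine ⟨⟨b, hb⟩, ?_⟩
      show QuotientGroup.mk _ = QuotientGroup.mk x
      rw [QuotientGroup.eq, Subgroup.mem_subgroupOf]
      have hcoe : (((Subgroup.inclusion (le_sup_right : M ≤ N ⊔ M) ⟨b, hb⟩)⁻¹ *
          x : ↥(N ⊔ M)) : X) = b⁻¹ * (a * b) := by
        push_cast
        rw [hab]
        rfl
      rw [hcoe]
      have hstep : b⁻¹ * (a * b) = b⁻¹ * a * b := by group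
      rw [hstep]
      exact hN.conj_mem' a ha b
    exact solvable_of_surjective hsurj
  exact solvable_of_ker_le_range f g hker

instance finite_subgroup {X : Type*} [Group X] [Finite X] : Finite (Subgroup X) :=
  Finite.of_injective (fun H => (H : Set X)) SetLike.coe_injective

theorem sol_isSolvable (G : Type*) [Group G] [Finite G] : Group.IsSolvable ↥(sol G) := by
  classical
  set s : Set (Subgroup G) := {N | N.Normal ∧ Group.IsSolvable ↥N} with hs
  have hfin : s.Finite := Set.toFinite s
  have hne : s.Nonempty := ⟨⊥, ⟨inferInstance, inferInstance⟩⟩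
  obtain ⟨M, hMs, hmax⟩ := Set.Finite.exists_maximalFor (fun N : Subgroup G => Nat.card N) s hfin hne
  have hall : ∀ N ∈ s, N ≤ M := by
    intro N hN
    have hmem : N ⊔ M ∈ s := by
      haveI := hN.1; haveI := hMs.1
      exact ⟨inferInstance, sup_normal_solvable hN.1 hN.2 hMs.2⟩
    have hle : Nat.card M ≤ Nat.card ↥(N ⊔ M) := card_mono le_sup_right
    have heq := hmax hmem hle
    have : M = N ⊔ M := eq_of_le_of_card_le' le_sup_right heq
    rw [this]
    exact le_sup_left
  have hMsol : M ≤ sol G := fun x hx => Subgroup.subset_closure ⟨M, hMs.1, hMs.2, hx⟩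
  have hsolM : sol G ≤ M := by
    apply (Subgroup.closure_le _).mpr
    rintro x ⟨N, hN1, hN2, hxN⟩
    exact hall N ⟨hN1, hN2⟩ hxN
  have : sol G = M := le_antisymm hsolM hMsol
  rw [this]
  exact hMs.2

end SolAux
/-- Distinct sol-components of a finite group normalize each other and commute
modulo `sol G`. -/
theorem solComponents_normalize_and_commute_mod_sol
    {G : Type*} [Group G] [Finite G] {K L : Subgroup G}
    (hK : K.IsSolComponent) (hL : L.IsSolComponent) (hKL : K ≠ L) :
    K ≤ Subgroup.normalizer (L : Set G) ∧ L ≤ Subgroup.normalizer (K : Set G) ∧ ⁅K, L⁆ ≤ sol G := by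
  obtain ⟨hKp, hKsub, hKbar_sub, hKbar_q⟩ := hK
  obtain ⟨hLp, hLsub, hLbar_sub, hLbar_q⟩ := hL
  set q := QuotientGroup.mk' (sol G) with hq
  have hqsurj := QuotientGroup.mk'_surjective (sol G)
  have hKsn : SolAux.SN K ⊤ := SolAux.isSubnormalIn_SN hKsub
  have hLsn : SolAux.SN L ⊤ := SolAux.isSubnormalIn_SN hLsub
  haveI : Finite (G ⧸ sol G) := Quotient.finite _
  haveI := SolAux.sol_isSolvable G
  obtain ⟨nS, hnS⟩ := SolAux.exists_iterDer_bot (sol G)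
  -- uniqueness of a perfect subnormal subgroup with given image mod `sol G`
  have huniq : ∀ K' L' : Subgroup G, ⁅K', K'⁆ = K' → SolAux.SN K' ⊤ →
      ⁅L', L'⁆ = L' → SolAux.SN L' ⊤ → K' ⊔ sol G = L' ⊔ sol G → K' = L' := by
    intro K' L' hK'p hK'sn hL'p hL'sn hsup
    have hK'Y : K' ≤ K' ⊔ sol G := le_sup_left
    have hL'Y : L' ≤ K' ⊔ sol G := hsup ▸ (le_sup_left : L' ≤ L' ⊔ sol G)
    have hSY : sol G ≤ K' ⊔ sol G := le_sup_right
    have hiter : SolAux.iterDer ((sol G).subgroupOf (K' ⊔ sol G)) nS = ⊥ := by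
      apply Subgroup.map_injective (K' ⊔ sol G).subtype_injective
      rw [SolAux.iterDer_map, SolAux.map_subtype_eq hSY, Subgroup.map_bot]
      exact hnS
    exact SolAux.eq_of_subgroupOf_eq hK'Y hL'Y
      (SolAux.unique_perfect_sn_solvable nS ↥(K' ⊔ sol G)
        ((sol G).subgroupOf (K' ⊔ sol G)) (K'.subgroupOf (K' ⊔ sol G))
        (L'.subgroupOf (K' ⊔ sol G))
        Subgroup.normal_subgroupOf hiter
        (SolAux.subgroupOf_perfect hK'Y hK'p) ((hK'sn.of_le hK'Y).subgroupOf)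
        (SolAux.subgroupOf_sup_eq_top hK'Y hSY rfl)
        (SolAux.subgroupOf_perfect hL'Y hL'p) ((hL'sn.of_le hL'Y).subgroupOf)
        (SolAux.subgroupOf_sup_eq_top hL'Y hSY hsup.symm))
  -- the images of K and L in G ⧸ sol G are distinct
  have himg : K.map q ≠ L.map q := by
    intro hc
    apply hKL
    apply huniq K L hKp hKsn hLp hLsn
    have := congrArg (Subgroup.comap q) hc
    rwa [Subgroup.comap_map_eq, Subgroup.comap_map_eq, QuotientGroup.ker_mk'] at this
  -- distinct components of G ⧸ sol G commute
  have hcommbar : ⁅K.map q, L.map q⁆ = ⊥ :=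
    SolAux.distinct_comps_commute (SolAux.isSubnormalIn_SN hKbar_sub) hKbar_q
      (SolAux.isSubnormalIn_SN hLbar_sub) hLbar_q himg
  have hcent : ∀ k ∈ K, ∀ l ∈ L, q k * q l = q l * q k := by
    intro k hk l hl
    have h1 : ⁅q k, q l⁆ ∈ (⊥ : Subgroup (G ⧸ sol G)) := by
      rw [← hcommbar]
      exact Subgroup.commutator_mem_commutator ⟨k, hk, rfl⟩ ⟨l, hl, rfl⟩
    rw [Subgroup.mem_bot] at h1
    exact commutatorElement_eq_one_iff_commute.mp h1
  -- conjugation by elements of K fixes L, and vice versa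
  have hconj : ∀ (A B : Subgroup G), ⁅A, A⁆ = A → SolAux.SN A ⊤ → ⁅B, B⁆ = B →
      SolAux.SN B ⊤ → (∀ b ∈ B, ∀ a ∈ A, q b * q a = q a * q b) →
      ∀ b ∈ B, A.map (MulAut.conj b).toMonoidHom = A := by
    intro A B hAp hAsn hBp hBsn hc b hb
    have hqfix : ∀ a ∈ A, q (b * a * b⁻¹) = q a := by
      intro a ha
      have := hc b hb a ha
      rw [map_mul, map_mul, map_inv]
      rw [this]
      group
    refine huniq _ A ?_ ?_ hAp hAsn ?_
    · rw [← Subgroup.map_commutator, hAp]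
    · have h2 := hAsn.map_equiv (MulAut.conj b)
      rwa [Subgroup.map_top_of_surjective _ (MulAut.conj b).surjective] at h2
    · have hmapeq : (A.map (MulAut.conj b).toMonoidHom).map q = A.map q := by
        ext x
        simp only [Subgroup.mem_map]
        constructor
        · rintro ⟨y, ⟨a, ha, rfl⟩, rfl⟩
          exact ⟨a, ha, (hqfix a ha).symm ▸ rfl⟩
        · rintro ⟨a, ha, rfl⟩
          exact ⟨(MulAut.conj b) a, ⟨a, ha, rfl⟩, hqfix a ha⟩
      have := congrArg (Subgroup.comap q) hmapeq
      rwa [Subgroup.comap_map_eq, Subgroup.comap_map_eq, QuotientGroup.ker_mk'] at this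
  have hnormal : ∀ (A B : Subgroup G), (∀ b ∈ B, A.map (MulAut.conj b).toMonoidHom = A) →
      B ≤ Subgroup.normalizer (A : Set G) := by
    intro A B hmap b hb
    rw [Subgroup.mem_normalizer_iff]
    intro x
    constructor
    · intro hx
      rw [← hmap b hb]
      exact ⟨x, hx, rfl⟩
    · intro hx
      rw [← hmap b hb] at hx
      obtain ⟨y, hy, hxy⟩ := hx
      have : y = x := by
        have : b * y * b⁻¹ = b * x * b⁻¹ := hxy
        have := mul_left_cancel (mul_right_cancel this)
        exact this
      exact this ▸ hy
  refine ⟨?_, ?_, ?_⟩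
  · exact hnormal L K (hconj L K hLp hLsn hKp hKsn hcent)
  · exact hnormal K L (hconj K L hKp hKsn hLp hLsn
      (fun b hbL a haK => (hcent a haK b hbL).symm))
  · have h1 : (⁅K, L⁆).map q = ⊥ := by rw [Subgroup.map_commutator, hcommbar]
    have h2 : ⁅K, L⁆ ≤ q.ker := (Subgroup.map_eq_bot_iff _).mp h1
    rwa [hq, QuotientGroup.ker_mk'] at h2
end

section
/- Suppose a finite group A acts coprimely on a finite group G and A centralizes the generalized Fitting subgroup F*(G). Then A centralizes G, i.e., [G, A] = 1. -/
/-- The subgroup of fixed points of the action of `a` on `G`. -/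
def fixedSub {A : Type*} (G : Type*) [Group A] [Group G] [MulDistribMulAction A G]
    (a : A) : Subgroup G where
  carrier := {g : G | a • g = g}
  one_mem' := smul_one a
  mul_mem' := by
    intro x y hx hy
    simp only [Set.mem_setOf_eq] at *
    rw [smul_mul', hx, hy]
  inv_mem' := by
    intro x hx
    simp only [Set.mem_setOf_eq] at *
    rw [smul_inv', hx]

/-- The commutator `[G, A]` of a group `G` with a group `A` acting on it:
the subgroup generated by all `g⁻¹ • (a • g)`. -/
def actCommutator (A G : Type*) [Group A] [Group G] [MulDistribMulAction A G] :
    Subgroup G :=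
  Subgroup.closure {x : G | ∃ (g : G) (a : A), x = g⁻¹ * (a • g)}

section SubnormalAux

variable {G : Type*} [Group G]

/-- Auxiliary inductive characterization of subnormality. -/
inductive SN_s4 {G : Type*} [Group G] : Subgroup G → Prop
  | top : SN_s4 ⊤
  | step {K H : Subgroup G} (hKH : K ≤ H) (hn : (K.subgroupOf H).Normal) (hH : SN_s4 H) : SN_s4 K

lemma SN_s4.of_normal {H : Subgroup G} (h : H.Normal) : SN_s4 H :=
  SN_s4.step le_top
    ((Subgroup.normal_subgroupOf_iff le_top).mpr fun k g hk _ => h.conj_mem k hk g) SN_s4.top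

lemma isSubnormalIn_top : (⊤ : Subgroup G).IsSubnormalIn :=
  ⟨0, fun _ => ⊤, rfl, rfl, fun i => i.elim0⟩

lemma Subgroup.IsSubnormalIn.prepend {S T : Subgroup G} (hS : S.IsSubnormalIn)
    (hTS : T ≤ S) (hn : (T.subgroupOf S).Normal) : T.IsSubnormalIn := by
  obtain ⟨n, c, hc0, hcl, hstep⟩ := hS
  refine ⟨n + 1, Fin.cons T c, Fin.cons_zero _ _, ?_, ?_⟩
  · rw [← Fin.succ_last, Fin.cons_succ]; exact hcl
  · intro i
    induction i using Fin.cases with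
    | zero =>
        have h2 : (Fin.cons T c : Fin (n+2) → Subgroup G) (Fin.castSucc (0 : Fin (n+1))) = T := by
          rw [Fin.castSucc_zero, Fin.cons_zero]
        have h3 : (Fin.cons T c : Fin (n+2) → Subgroup G) (Fin.succ (0 : Fin (n+1))) = c 0 := Fin.cons_succ _ _ _
        rw [h2, h3, hc0]
        exact ⟨hTS, hn⟩
    | succ j =>
        have h2 : (Fin.cons T c : Fin (n+2) → Subgroup G) (Fin.castSucc (Fin.succ j)) = c j.castSucc := by
          rw [← Fin.succ_castSucc, Fin.cons_succ]
        have h3 : (Fin.cons T c : Fin (n+2) → Subgroup G) (Fin.succ (Fin.succ j)) = c j.succ := Fin.cons_succ _ _ _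
        rw [h2, h3]
        exact hstep j

lemma SN_s4.isSubnormalIn {S : Subgroup G} (h : SN_s4 S) : S.IsSubnormalIn := by
  induction h with
  | top => exact isSubnormalIn_top
  | step hKH hn _ ih => exact ih.prepend hKH hn

lemma Subgroup.IsSubnormalIn.map_equiv {G' : Type*} [Group G'] (e : G ≃* G') {S : Subgroup G}
    (hS : S.IsSubnormalIn) : (S.map e.toMonoidHom).IsSubnormalIn := by
  obtain ⟨n, c, hc0, hcl, hstep⟩ := hS
  refine ⟨n, fun i => (c i).map e.toMonoidHom, by simp only [hc0],
    by simp only [hcl]; exact Subgroup.map_top_of_surjective _ e.surjective, ?_⟩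
  intro i
  obtain ⟨hle, hnm⟩ := hstep i
  refine ⟨Subgroup.map_mono hle, ?_⟩
  rw [Subgroup.normal_subgroupOf_iff (Subgroup.map_mono hle)]
  rintro h k ⟨x, hx, rfl⟩ ⟨y, hy, rfl⟩
  have hm := (Subgroup.normal_subgroupOf_iff hle).mp hnm x y hx hy
  exact ⟨y * x * y⁻¹, hm, by simp only [map_mul, map_inv]⟩

end SubnormalAux
section EquivTransport

lemma map_center_equiv {H K : Type*} [Group H] [Group K] (e : H ≃* K) :
    (Subgroup.center H).map e.toMonoidHom = Subgroup.center K := by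
  ext k
  rw [Subgroup.mem_map_equiv]
  constructor
  · intro h
    rw [Subgroup.mem_center_iff] at h ⊢
    intro g
    apply e.symm.injective
    simp only [map_mul]
    exact h (e.symm g)
  · intro h
    rw [Subgroup.mem_center_iff] at h ⊢
    intro g
    apply e.injective
    simp only [map_mul, MulEquiv.apply_symm_apply]
    exact h (e g)

lemma isSimpleGroup_of_equiv {H K : Type*} [Group H] [Group K] (e : H ≃* K)
    (h : IsSimpleGroup H) : IsSimpleGroup K := by
  haveI : Nontrivial H := h.toNontrivial
  haveI : Nontrivial K := e.symm.toEquiv.nontrivial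
  constructor
  intro N hN
  have hc : (N.comap e.toMonoidHom).Normal := hN.comap _
  rcases h.eq_bot_or_eq_top_of_normal (N.comap e.toMonoidHom) hc with h' | h'
  · left
    have := congrArg (Subgroup.map e.toMonoidHom) h'
    rwa [Subgroup.map_comap_eq_self_of_surjective e.surjective, Subgroup.map_bot] at this
  · right
    have := congrArg (Subgroup.map e.toMonoidHom) h'
    rwa [Subgroup.map_comap_eq_self_of_surjective e.surjective,
      Subgroup.map_top_of_surjective _ e.surjective] at this

lemma IsQuasisimple.of_equiv {H K : Type*} [Group H] [Group K] (e : H ≃* K)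
    (h : IsQuasisimple H) : IsQuasisimple K := by
  obtain ⟨hperf, hsimp⟩ := h
  constructor
  · have := congrArg (Subgroup.map e.toMonoidHom) hperf
    rwa [Subgroup.map_commutator, Subgroup.map_top_of_surjective _ e.surjective] at this
  · exact isSimpleGroup_of_equiv (QuotientGroup.congr _ _ e (map_center_equiv e)) hsimp

variable {G : Type*} [Group G]

lemma Subgroup.IsComponent.map_equiv (e : G ≃* G) {K : Subgroup G} (h : K.IsComponent) :
    (K.map e.toMonoidHom).IsComponent := by
  obtain ⟨hsn, hq⟩ := h
  exact ⟨hsn.map_equiv e, hq.of_equiv (K.equivMapOfInjective e.toMonoidHom e.injective)⟩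

instance layer_normal (G : Type*) [Group G] : (layer G).Normal := by
  constructor
  intro n hn g
  induction hn using Subgroup.closure_induction with
  | mem x hx =>
      obtain ⟨K, hK, hxK⟩ := hx
      refine Subgroup.subset_closure ⟨K.map (MulAut.conj g).toMonoidHom, hK.map_equiv _, ?_⟩
      exact ⟨x, hxK, rfl⟩
  | one => simpa using (layer G).one_mem
  | mul x y _ _ hx hy =>
      have : g * (x * y) * g⁻¹ = (g * x * g⁻¹) * (g * y * g⁻¹) := by group
      rw [this]; exact (layer G).mul_mem hx hy
  | inv x _ hx =>
      have : g * x⁻¹ * g⁻¹ = (g * x * g⁻¹)⁻¹ := by group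
      rw [this]; exact (layer G).inv_mem hx

instance fitting_normal (G : Type*) [Group G] : (fitting G).Normal := by
  constructor
  intro n hn g
  induction hn using Subgroup.closure_induction with
  | mem x hx =>
      obtain ⟨N, hN, hNs, hxN⟩ := hx
      exact Subgroup.subset_closure ⟨N, hN, hNs, hN.conj_mem x hxN g⟩
  | one => simpa using (fitting G).one_mem
  | mul x y _ _ hx hy =>
      have : g * (x * y) * g⁻¹ = (g * x * g⁻¹) * (g * y * g⁻¹) := by group
      rw [this]; exact (fitting G).mul_mem hx hy
  | inv x _ hx =>
      have : g * x⁻¹ * g⁻¹ = (g * x * g⁻¹)⁻¹ := by group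
      rw [this]; exact (fitting G).inv_mem hx

instance pCore_normal (p : ℕ) (G : Type*) [Group G] : (pCore p G).Normal := by
  constructor
  intro n hn g
  induction hn using Subgroup.closure_induction with
  | mem x hx =>
      obtain ⟨N, hN, hNs, hxN⟩ := hx
      exact Subgroup.subset_closure ⟨N, hN, hNs, hN.conj_mem x hxN g⟩
  | one => simpa using (pCore p G).one_mem
  | mul x y _ _ hx hy =>
      have : g * (x * y) * g⁻¹ = (g * x * g⁻¹) * (g * y * g⁻¹) := by group
      rw [this]; exact (pCore p G).mul_mem hx hy
  | inv x _ hx =>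
      have : g * x⁻¹ * g⁻¹ = (g * x * g⁻¹)⁻¹ := by group
      rw [this]; exact (pCore p G).inv_mem hx

instance Fstar_normal (G : Type*) [Group G] : (Fstar G).Normal :=
  Subgroup.sup_normal _ _

lemma fitting_le_Fstar (G : Type*) [Group G] : fitting G ≤ Fstar G := le_sup_left

lemma layer_le_Fstar (G : Type*) [Group G] : layer G ≤ Fstar G := le_sup_right

end EquivTransport
section PCore

variable {G : Type*} [Group G]

lemma exists_of_mem_pCore {p : ℕ} {x : G} (hx : x ∈ pCore p G) :
    ∃ N : Subgroup G, N.Normal ∧ IsPGroup p N ∧ x ∈ N := by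
  induction hx using Subgroup.closure_induction with
  | mem x hx => exact hx
  | one => exact ⟨⊥, inferInstance, IsPGroup.of_bot, Subgroup.one_mem _⟩
  | mul x y _ _ hx hy =>
      obtain ⟨N₁, h₁n, h₁p, hx⟩ := hx
      obtain ⟨N₂, h₂n, h₂p, hy⟩ := hy
      haveI := h₁n; haveI := h₂n
      refine ⟨N₁ ⊔ N₂, inferInstance, IsPGroup.to_sup_of_normal_right h₁p h₂p, ?_⟩
      exact Subgroup.mul_mem _ (Subgroup.mem_sup_left hx) (Subgroup.mem_sup_right hy)
  | inv x _ hx =>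
      obtain ⟨N, hn, hp, hx⟩ := hx
      exact ⟨N, hn, hp, N.inv_mem hx⟩

lemma pCore_isPGroup {p : ℕ} : IsPGroup p (pCore p G) := by
  intro x
  obtain ⟨N, hn, hp, hx⟩ := exists_of_mem_pCore x.2
  obtain ⟨k, hk⟩ := hp ⟨x, hx⟩
  refine ⟨k, ?_⟩
  have : ((⟨(x : G), hx⟩ : N) : G) ^ p ^ k = 1 := by
    rw [← SubgroupClass.coe_pow, hk]; rfl
  ext
  simpa using this

lemma pCore_le_fitting [Finite G] {p : ℕ} [Fact p.Prime] : pCore p G ≤ fitting G :=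
  fun x hx => Subgroup.subset_closure ⟨pCore p G, inferInstance, pCore_isPGroup.isNilpotent, hx⟩

lemma pCore_mem_equiv {p : ℕ} (e : G ≃* G) {x : G} (hx : x ∈ pCore p G) :
    e x ∈ pCore p G := by
  induction hx using Subgroup.closure_induction with
  | mem y hy =>
      obtain ⟨N, hn, hp, hyN⟩ := hy
      exact Subgroup.subset_closure
        ⟨N.map e.toMonoidHom, hn.map _ e.surjective, hp.map _, ⟨y, hyN, rfl⟩⟩
  | one => rw [map_one]; exact (pCore p G).one_mem
  | mul x y _ _ hx hy => rw [map_mul]; exact (pCore p G).mul_mem hx hy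
  | inv x _ hx => rw [map_inv]; exact (pCore p G).inv_mem hx

/-- Conjugation-type automorphism of a subgroup. -/
def conjSubgroupEquiv {K : Subgroup G} (g : G) (hc : ∀ k ∈ K, g * k * g⁻¹ ∈ K)
    (hc' : ∀ k ∈ K, g⁻¹ * k * g ∈ K) : ↥K ≃* ↥K where
  toFun x := ⟨g * x * g⁻¹, hc x x.2⟩
  invFun x := ⟨g⁻¹ * x * g, hc' x x.2⟩
  left_inv x := Subtype.ext (by simp only []; group)
  right_inv x := Subtype.ext (by simp only []; group)
  map_mul' x y := Subtype.ext (by push_cast; group)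

lemma conj_pCoreMap_mem {K : Subgroup G} (g : G) (hc : ∀ k ∈ K, g * k * g⁻¹ ∈ K)
    (hc' : ∀ k ∈ K, g⁻¹ * k * g ∈ K) {p : ℕ} {r : G}
    (hr : r ∈ (pCore p ↥K).map K.subtype) : g * r * g⁻¹ ∈ (pCore p ↥K).map K.subtype := by
  obtain ⟨q, hq, rfl⟩ := hr
  exact ⟨conjSubgroupEquiv g hc hc' q, pCore_mem_equiv _ hq, rfl⟩

lemma SN_s4.pcore_aux {p : ℕ} {H : Subgroup G} (h : SN_s4 H) :
    ∀ P : Subgroup G, P ≤ H → ((P.subgroupOf H).Normal) → IsPGroup p P → P ≤ pCore p G := by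
  induction h with
  | top =>
      intro P hle hnm hp
      have hPn : P.Normal := by
        constructor
        intro x hx g
        exact (Subgroup.normal_subgroupOf_iff le_top).mp hnm x g hx trivial
      exact fun x hx => Subgroup.subset_closure ⟨P, hPn, hp, hx⟩
  | @step K H hKH hnm' _ ih =>
      intro P hPK hPnm hPp
      set R := (pCore p ↥K).map K.subtype with hR
      have hRK : R ≤ K := Subgroup.map_subtype_le _
      have hPR : P ≤ R := by
        have hsub : P.subgroupOf K ≤ pCore p ↥K := fun y hy =>
          Subgroup.subset_closure
            ⟨P.subgroupOf K, hPnm, hPp.of_equiv (Subgroup.subgroupOfEquivOfLe hPK).symm, hy⟩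
        intro x hx
        exact ⟨⟨x, hPK hx⟩, hsub (by simpa [Subgroup.mem_subgroupOf] using hx), rfl⟩
      have hRp : IsPGroup p R := pCore_isPGroup.map _
      have hRH : R ≤ H := hRK.trans hKH
      have hRnm : (R.subgroupOf H).Normal := by
        rw [Subgroup.normal_subgroupOf_iff hRH]
        intro r k hr hk
        exact conj_pCoreMap_mem k
          (fun x hx => (Subgroup.normal_subgroupOf_iff hKH).mp hnm' x k hx hk)
          (fun x hx => by
            have := (Subgroup.normal_subgroupOf_iff hKH).mp hnm' x k⁻¹ hx (H.inv_mem hk)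
            simpa using this) hr
      exact hPR.trans (ih R hRH hRnm hRp)

lemma SN_s4.le_pCore {p : ℕ} {P : Subgroup G} (h : SN_s4 P) (hp : IsPGroup p P) :
    P ≤ pCore p G := by
  refine h.pcore_aux P le_rfl ?_ hp
  rw [Subgroup.subgroupOf_self]
  infer_instance

end PCore
section NilpotentFitting

variable {G : Type*} [Group G]

lemma SN_s4.le_fitting [Finite G] {S : Subgroup G} (h : SN_s4 S) (hn : Group.IsNilpotent ↥S) :
    S ≤ fitting G := by
  have key : ∀ m : ℕ, ∀ s ∈ S, orderOf s = m → s ∈ fitting G := by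
    intro m
    induction m using Nat.strong_induction_on with
    | _ m ih =>
      intro s hs hord
      rcases eq_or_ne s 1 with rfl | hs1
      · exact (fitting G).one_mem
      have hm0 : m ≠ 0 := by rw [← hord]; exact (orderOf_pos s).ne'
      have hm1 : m ≠ 1 := by rw [← hord, Ne, orderOf_eq_one_iff]; exact hs1
      by_cases hpp : ∃ (p k : ℕ), p.Prime ∧ m = p ^ k
      · obtain ⟨p, k, hp, rfl⟩ := hpp
        haveI : Fact p.Prime := ⟨hp⟩
        set σ : ↥S := ⟨s, hs⟩ with hσ
        have horder : orderOf σ = p ^ k := by rw [Subgroup.orderOf_mk]; exact hord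
        have hzp : IsPGroup p (Subgroup.zpowers σ) :=
          IsPGroup.of_card (by rw [Nat.card_zpowers, horder])
        obtain ⟨Q, hQle⟩ := hzp.exists_le_sylow
        have hQn : (Q : Subgroup ↥S).Normal := by
          have htfae :=
            ((isNilpotent_of_finite_tfae (G := ↥S)).out 0 3 : Group.IsNilpotent ↥S ↔ _)
          exact htfae.mp hn p ‹_› Q
        set P := (Q : Subgroup ↥S).map S.subtype with hP
        have hPS : P ≤ S := Subgroup.map_subtype_le _
        have hPnm : (P.subgroupOf S).Normal := by
          have h2 : P.subgroupOf S = (Q : Subgroup ↥S) :=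
            Subgroup.comap_map_eq_self_of_injective S.subtype_injective _
          rw [h2]; exact hQn
        have hSN : SN_s4 P := SN_s4.step hPS hPnm h
        have hle : P ≤ pCore p G := hSN.le_pCore (Q.isPGroup'.map _)
        exact pCore_le_fitting (hle ⟨σ, hQle (Subgroup.mem_zpowers σ), rfl⟩)
      · -- composite order: split into two coprime parts
        set p := m.minFac with hpdef
        have hp : p.Prime := Nat.minFac_prime hm1
        set e := m.factorization p with hedef
        have he : e ≠ 0 := (hp.factorization_pos_of_dvd hm0 (Nat.minFac_dvd m)).ne'
        set u := p ^ e with hudef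
        set v := m / u with hvdef
        have hm' : u * v = m := Nat.ordProj_mul_ordCompl_eq_self m p
        have hcop_uv : u.Coprime v := (Nat.coprime_ordCompl hp hm0).pow_left e
        have hu1 : 1 < u := Nat.one_lt_pow he hp.one_lt
        have hv0 : 0 < v := Nat.ordCompl_pos p hm0
        have hv1 : 1 < v := by
          rcases Nat.lt_or_ge 1 v with h' | h'
          · exact h'
          · exfalso
            have hveq : v = 1 := le_antisymm h' hv0
            exact hpp ⟨p, e, hp, by rw [← hm', hveq, mul_one]⟩
        obtain ⟨c, -, hc⟩ := Nat.exists_mul_mod_eq_one_of_coprime hcop_uv hv1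
        obtain ⟨d, -, hd⟩ := Nat.exists_mul_mod_eq_one_of_coprime hcop_uv.symm hu1
        have hmod : u * c + v * d ≡ 1 [MOD m] := by
          rw [← hm']
          apply (Nat.modEq_and_modEq_iff_modEq_mul hcop_uv).mp
          constructor
          · have h1 : u * c ≡ 0 [MOD u] := Nat.modEq_zero_iff_dvd.mpr ⟨c, rfl⟩
            have h2 : v * d ≡ 1 [MOD u] := by
              show v * d % u = 1 % u
              rw [hd, Nat.mod_eq_of_lt hu1]
            simpa using h1.add h2
          · have h1 : u * c ≡ 1 [MOD v] := by
              show u * c % v = 1 % v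
              rw [hc, Nat.mod_eq_of_lt hv1]
            have h2 : v * d ≡ 0 [MOD v] := Nat.modEq_zero_iff_dvd.mpr ⟨d, rfl⟩
            simpa using h1.add h2
        have hs_eq : s = s ^ (u * c) * s ^ (v * d) := by
          rw [← pow_add]
          have hmod' : u * c + v * d ≡ 1 [MOD orderOf s] := by rw [hord]; exact hmod
          have hpe : s ^ (u * c + v * d) = s ^ 1 := pow_eq_pow_iff_modEq.mpr hmod'
          rw [pow_one] at hpe
          exact hpe.symm
        have hx1 : (s ^ (u * c)) ^ v = 1 := by
          rw [← pow_mul, show u * c * v = m * c by rw [← hm']; ring, pow_mul, ← hord,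
            pow_orderOf_eq_one, one_pow]
        have hy1 : (s ^ (v * d)) ^ u = 1 := by
          rw [← pow_mul, show v * d * u = m * d by rw [← hm']; ring, pow_mul, ← hord,
            pow_orderOf_eq_one, one_pow]
        have hxlt : orderOf (s ^ (u * c)) < m := by
          have hdvd := orderOf_dvd_of_pow_eq_one hx1
          have := Nat.le_of_dvd hv0 hdvd
          have hvm : v < m := by
            rw [← hm']
            exact (Nat.lt_mul_iff_one_lt_left hv0).mpr hu1
          omega
        have hylt : orderOf (s ^ (v * d)) < m := by
          have hdvd := orderOf_dvd_of_pow_eq_one hy1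
          have hu0 : 0 < u := by omega
          have := Nat.le_of_dvd hu0 hdvd
          have hum : u < m := by
            rw [← hm']
            exact (Nat.lt_mul_iff_one_lt_right hu0).mpr hv1
          omega
        rw [hs_eq]
        exact (fitting G).mul_mem
          (ih _ hxlt _ (S.pow_mem hs _) rfl)
          (ih _ hylt _ (S.pow_mem hs _) rfl)
  exact fun s hs => key (orderOf s) s hs rfl

end NilpotentFitting
section Bender

lemma centralizer_Fstar_le (G : Type*) [Group G] [Finite G] :
    Subgroup.centralizer (Fstar G : Set G) ≤ Fstar G := by
  by_contra hC
  set C := Subgroup.centralizer (Fstar G : Set G) with hCdef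
  have hCn : C.Normal := by
    constructor
    intro c hc g
    rw [hCdef, Subgroup.mem_centralizer_iff] at hc ⊢
    intro h hh
    have h2 : g⁻¹ * h * g ∈ Fstar G := by
      have := (Fstar_normal G).conj_mem h hh g⁻¹
      simpa using this
    have h3 := hc _ h2
    calc h * (g * c * g⁻¹) = g * ((g⁻¹ * h * g) * c) * g⁻¹ := by group
    _ = g * (c * (g⁻¹ * h * g)) * g⁻¹ := by rw [h3]
    _ = (g * c * g⁻¹) * h := by group
  have hne : {S : Subgroup G | S ≤ C ∧ ¬S ≤ Fstar G ∧ SN_s4 S}.Nonempty :=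
    ⟨C, le_rfl, hC, SN_s4.of_normal hCn⟩
  obtain ⟨S, ⟨hSC, hSF, hSsn⟩, hmin⟩ :=
    (Finite.to_wellFoundedLT (α := Subgroup G)).wf.has_min _ hne
  have hScomm : ∀ s ∈ S, ∀ t ∈ Fstar G, t * s = s * t := by
    intro s hss t ht
    exact Subgroup.mem_centralizer_iff.mp (hSC hss) t ht
  have key : ∀ T : Subgroup G, T ≤ S → (T.subgroupOf S).Normal → T ≠ S → T ≤ Fstar G := by
    intro T hTS hTn hne'
    by_contra hTF
    exact hmin T ⟨hTS.trans hSC, hTF, SN_s4.step hTS hTn hSsn⟩ (lt_of_le_of_ne hTS hne')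
  have hmapS : ∀ g ∈ S, ∀ x ∈ S, g * x * g⁻¹ ∈ S := fun g hg x hx =>
    S.mul_mem (S.mul_mem hg hx) (S.inv_mem hg)
  have hmt : (⊤ : Subgroup ↥S).map S.subtype = S := by
    ext x
    simp [Subgroup.mem_map]
  set T₀ := ⁅S, S⁆ with hT₀
  have hT₀S : T₀ ≤ S := by
    rw [hT₀, Subgroup.commutator_le]
    intro g₁ h₁ g₂ h₂
    exact S.mul_mem (S.mul_mem (S.mul_mem h₁ h₂) (S.inv_mem h₁)) (S.inv_mem h₂)
  have hT₀n : (T₀.subgroupOf S).Normal := by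
    rw [Subgroup.normal_subgroupOf_iff hT₀S]
    intro t k ht hk
    have hconjS : S.map (MulAut.conj k).toMonoidHom ≤ S := by
      rintro _ ⟨x, hx, rfl⟩
      simpa using hmapS k hk x hx
    have hmap : T₀.map (MulAut.conj k).toMonoidHom ≤ T₀ := by
      rw [hT₀, Subgroup.map_commutator]
      exact Subgroup.commutator_mono hconjS hconjS
    exact hmap ⟨t, ht, rfl⟩
  by_cases hperf : T₀ = S
  · -- S is quasisimple, hence a component, contradiction
    have hcentr : ∀ T : Subgroup ↥S, T.Normal → T ≠ ⊤ → T ≤ Subgroup.center ↥S := by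
      intro T hTn hTne
      have hTS' : T.map S.subtype ≤ S := Subgroup.map_subtype_le _
      have hTn' : ((T.map S.subtype).subgroupOf S).Normal := by
        have h2 : (T.map S.subtype).subgroupOf S = T :=
          Subgroup.comap_map_eq_self_of_injective S.subtype_injective _
        rw [h2]; exact hTn
      have hne2 : T.map S.subtype ≠ S := by
        intro hEq
        apply hTne
        apply Subgroup.map_injective S.subtype_injective
        rw [hEq, hmt]
      have hTF := key _ hTS' hTn' hne2
      intro t ht
      rw [Subgroup.mem_center_iff]
      intro g
      have h4 : (t : G) ∈ Fstar G := hTF ⟨t, ht, rfl⟩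
      exact Subtype.ext ((hScomm (↑g) g.2 (↑t) h4).symm)
    have hZne : Subgroup.center ↥S ≠ ⊤ := by
      intro hcen
      apply hSF
      have hab : ∀ x y : ↥S, x * y = y * x := fun x y =>
        Subgroup.mem_center_iff.mp (hcen ▸ Subgroup.mem_top y) x
      have hbot : T₀ = ⊥ := by
        rw [hT₀, eq_bot_iff, Subgroup.commutator_le]
        intro g₁ h₁ g₂ h₂
        rw [Subgroup.mem_bot]
        have hgg : g₁ * g₂ = g₂ * g₁ := congrArg Subtype.val (hab ⟨g₁, h₁⟩ ⟨g₂, h₂⟩)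
        rw [commutatorElement_def, hgg]
        group
      rw [← hperf, hbot]
      exact bot_le
    have hq : IsQuasisimple ↥S := by
      constructor
      · apply Subgroup.map_injective S.subtype_injective
        rw [Subgroup.map_commutator, hmt]
        exact hperf
      · haveI : Nontrivial (↥S ⧸ Subgroup.center ↥S) := by
          obtain ⟨x, hx⟩ : ∃ x : ↥S, x ∉ Subgroup.center ↥S := by
            by_contra hcon
            push_neg at hcon
            exact hZne ((Subgroup.eq_top_iff' _).mpr hcon)
          exact ⟨⟨(x : ↥S ⧸ Subgroup.center ↥S), 1, fun hEq =>
            hx ((QuotientGroup.eq_one_iff x).mp hEq)⟩⟩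
        constructor
        intro W hW
        set T := W.comap (QuotientGroup.mk' (Subgroup.center ↥S)) with hTdef
        have hTn : T.Normal := Subgroup.Normal.comap hW _
        have hWT : W = T.map (QuotientGroup.mk' (Subgroup.center ↥S)) :=
          (Subgroup.map_comap_eq_self_of_surjective
            (QuotientGroup.mk'_surjective _) W).symm
        by_cases hT : T = ⊤
        · right
          rw [hWT, hT]
          exact Subgroup.map_top_of_surjective _ (QuotientGroup.mk'_surjective _)
        · left
          have hle := hcentr T hTn hT
          rw [hWT, eq_bot_iff]
          rintro _ ⟨y, hy, rfl⟩
          rw [Subgroup.mem_bot]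
          exact (QuotientGroup.eq_one_iff y).mpr (hle hy)
    have hSlayer : S ≤ layer G := fun x hx =>
      Subgroup.subset_closure ⟨S, ⟨hSsn.isSubnormalIn, hq⟩, hx⟩
    exact hSF (hSlayer.trans (layer_le_Fstar G))
  · -- S is nilpotent, contradiction
    have hT₀F : T₀ ≤ Fstar G := key T₀ hT₀S hT₀n hperf
    have hcomm_le : ⁅(⊤ : Subgroup ↥S), (⊤ : Subgroup ↥S)⁆ ≤ Subgroup.center ↥S := by
      intro x hx
      have hx' : (x : G) ∈ T₀ := by
        have hmem : (x : G) ∈ (⁅(⊤ : Subgroup ↥S), (⊤ : Subgroup ↥S)⁆).map S.subtype :=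
          ⟨x, hx, rfl⟩
        rwa [Subgroup.map_commutator, hmt, ← hT₀] at hmem
      rw [Subgroup.mem_center_iff]
      intro g
      exact Subtype.ext ((hScomm (↑g) g.2 (↑x) (hT₀F hx')).symm)
    have hnil : Group.IsNilpotent ↥S := by
      refine @isNilpotent_of_ker_le_center _ _ _ _ (QuotientGroup.mk' (Subgroup.center ↥S)) ?_ ?_
      · exact (QuotientGroup.ker_mk' _).le
      · refine ⟨1, ?_⟩
        rw [upperCentralSeries_one, Subgroup.eq_top_iff']
        intro x
        rw [Subgroup.mem_center_iff]
        intro g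
        obtain ⟨a, rfl⟩ := QuotientGroup.mk'_surjective _ x
        obtain ⟨b, rfl⟩ := QuotientGroup.mk'_surjective _ g
        have hqe : ((b * a : ↥S) : ↥S ⧸ Subgroup.center ↥S)
            = ((a * b : ↥S) : ↥S ⧸ Subgroup.center ↥S) := by
          rw [QuotientGroup.eq]
          have hre : (b * a)⁻¹ * (a * b) = a⁻¹ * b⁻¹ * a⁻¹⁻¹ * b⁻¹⁻¹ := by
            group
          rw [hre]
          exact hcomm_le
            (Subgroup.commutator_mem_commutator (Subgroup.mem_top _) (Subgroup.mem_top _))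
        simpa using hqe
    exact hSF ((hSsn.le_fitting hnil).trans (fitting_le_Fstar G))

end Bender
/-- If a finite group `A` acts coprimely on a finite group `G` and `A` centralizes
the generalized Fitting subgroup `F*(G)`, then `[G, A] = 1`. -/
theorem actCommutator_eq_bot_of_centralizes_Fstar
    {A G : Type*} [Group A] [Group G] [Finite A] [Finite G] [MulDistribMulAction A G]
    (hcop : (Nat.card A).Coprime (Nat.card G))
    (hsol : IsSolvable A ∨ IsSolvable G)
    (hcent : ∀ (a : A), ∀ x ∈ Fstar G, a • x = x) :
    actCommutator A G = ⊥ := by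
  have key : ∀ (a : A) (g : G), a • g = g := by
    intro a g
    set c := g⁻¹ * (a • g) with hc
    have hag : a • g = g * c := by rw [hc]; group
    have hcC : c ∈ Subgroup.centralizer (Fstar G : Set G) := by
      rw [Subgroup.mem_centralizer_iff]
      intro x hx
      have h2 : g * x * g⁻¹ ∈ Fstar G := (Fstar_normal G).conj_mem x hx g
      have h3 : (a • g) * x * (a • g)⁻¹ = g * x * g⁻¹ := by
        have h1 : a⁻¹ • x = x := hcent a⁻¹ x hx
        have h4 : (a • g) * x * (a • g)⁻¹ = a • (g * (a⁻¹ • x) * g⁻¹) := by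
          rw [smul_mul', smul_mul', smul_inv', smul_inv_smul]
        rw [h4, h1]
        exact hcent a _ h2
      have h5 : c * x * c⁻¹ = x := by
        rw [hc]
        calc g⁻¹ * (a • g) * x * (g⁻¹ * (a • g))⁻¹
            = g⁻¹ * ((a • g) * x * (a • g)⁻¹) * g := by group
        _ = g⁻¹ * (g * x * g⁻¹) * g := by rw [h3]
        _ = x := by group
      have h6 := congrArg (fun z => z * c) h5
      calc x * c = c * x * c⁻¹ * c := by rw [h5]
      _ = c * x := by group
    have hcF : c ∈ Fstar G := centralizer_Fstar_le G hcC
    have hpow : ∀ k : ℕ, a ^ k • g = g * c ^ k := by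
      intro k
      induction k with
      | zero => simp
      | succ k ih =>
          have hstep : a ^ (k + 1) = a * a ^ k := by rw [pow_succ']
          rw [hstep, mul_smul, ih, smul_mul', hag, smul_pow', hcent a c hcF,
            mul_assoc, ← pow_succ']
    have h8 : c ^ orderOf a = 1 := by
      have h9 := hpow (orderOf a)
      rw [pow_orderOf_eq_one, one_smul] at h9
      exact (left_eq_mul.mp h9)
    have h10 : orderOf c ∣ Nat.card A :=
      (orderOf_dvd_of_pow_eq_one h8).trans (orderOf_dvd_natCard a)
    have h11 : orderOf c ∣ Nat.card G := orderOf_dvd_natCard c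
    have h12 : orderOf c = 1 := Nat.dvd_one.mp (hcop ▸ Nat.dvd_gcd h10 h11)
    have h13 : c = 1 := orderOf_eq_one_iff.mp h12
    rw [hag, h13, mul_one]
  rw [eq_bot_iff, actCommutator]
  rw [Subgroup.closure_le]
  rintro x ⟨g, a, rfl⟩
  simp [key a g]
end
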